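/- arXiv:2405.10710 — 3 statements merged into one kernel-verified Lean document; each statement's English description precedes it below -/
import Mathlib

section
/- Let q be an even prime power and F = GF(q). Let y = (y0,...,y5) ∈ F^6 be nonzero with y0 = y3 = y5 = 0 (such y automatically has rank(M_y) = 2 and corresponds to a point of the nucleus plane). Then among the conics of the squab S_y there are exactly q^2+q+1 double lines, exactly (q^3+2q^2+q)/2 pairs of real lines, exactly (q^3−q)/2 pairs of imaginary lines, and exactly q^4−q^2 nonsingular conics. -/
open Matrix

namespace Conics

/-- Coefficient vector (a0,...,a5) of the product of two linear forms
`(b0*X0+b1*X1+b2*X2)*(c0*X0+c1*X1+c2*X2)`, where the quadratic form with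
coefficient vector `a` is `a0*X0^2 + a1*X0*X1 + a2*X0*X2 + a3*X1^2 + a4*X1*X2 + a5*X2^2`. -/
def mulLin {F : Type} [Field F] (b c : Fin 3 → F) : Fin 6 → F :=
  ![b 0 * c 0, b 0 * c 1 + b 1 * c 0, b 0 * c 2 + b 2 * c 0,
    b 1 * c 1, b 1 * c 2 + b 2 * c 1, b 2 * c 2]

/-- The discriminant of the quadratic form with coefficient vector `a`. -/
def disc {F : Type} [Field F] (a : Fin 6 → F) : F :=
  4 * a 0 * a 3 * a 5 + a 1 * a 2 * a 4 - a 0 * a 4 ^ 2 - a 3 * a 2 ^ 2 - a 5 * a 1 ^ 2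

/-- `f_a` is a double line: `f_a = c * l^2` for a nonzero scalar `c` and nonzero linear form `l`. -/
def IsDoubleLine {F : Type} [Field F] (a : Fin 6 → F) : Prop :=
  ∃ (c : F) (l : Fin 3 → F), c ≠ 0 ∧ l ≠ 0 ∧ a = c • mulLin l l

/-- `f_a` is a pair of (distinct) real lines: `f_a = l1 * l2` with neither linear form a scalar
multiple of the other. -/
def IsRealPair {F : Type} [Field F] (a : Fin 6 → F) : Prop :=
  ∃ l1 l2 : Fin 3 → F, (¬ ∃ t : F, l2 = t • l1) ∧ (¬ ∃ t : F, l1 = t • l2) ∧ a = mulLin l1 l2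

/-- `f_a` is a pair of conjugate imaginary lines: singular, but not a product of two linear
forms over `F`. -/
def IsImagPair {F : Type} [Field F] (a : Fin 6 → F) : Prop :=
  disc a = 0 ∧ ¬ ∃ l1 l2 : Fin 3 → F, a = mulLin l1 l2

/-- `f_a` is a nonsingular conic. -/
def IsNonsingular {F : Type} [Field F] (a : Fin 6 → F) : Prop :=
  disc a ≠ 0

/-- The number of conics of a given type `T` in a linear system `W` (a subspace of the space of
quadratic forms, identified with `F^6`): the number of 1-dimensional subspaces `⟨a⟩` of `W`,
`a ≠ 0`, such that `f_a` has type `T`. -/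
noncomputable def numConics {F : Type} [Field F] (W : Submodule F (Fin 6 → F))
    (T : (Fin 6 → F) → Prop) : ℕ :=
  Set.ncard {P : Submodule F (Fin 6 → F) |
    ∃ a : Fin 6 → F, a ≠ 0 ∧ a ∈ W ∧ T a ∧ P = Submodule.span F {a}}

/-- The symmetric 3×3 matrix associated with a point `y` of `PG(5,q)`. -/
def M {F : Type} [Field F] (y : Fin 6 → F) : Matrix (Fin 3) (Fin 3) F :=
  !![y 0, y 1, y 2; y 1, y 3, y 4; y 2, y 4, y 5]

/-- The pairing `B(a,y) = a0*y0 + ... + a5*y5`. -/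
def Bform {F : Type} [Field F] (a y : Fin 6 → F) : F :=
  a 0 * y 0 + a 1 * y 1 + a 2 * y 2 + a 3 * y 3 + a 4 * y 4 + a 5 * y 5

/-- The squab of conics associated with a (nonzero) point `y`: the hyperplane
`{a : B(a,y) = 0}` of the space of quadratic forms. -/
def squab {F : Type} [Field F] (y : Fin 6 → F) : Submodule F (Fin 6 → F) where
  carrier := {a | Bform a y = 0}
  add_mem' := by
    intro a b ha hb
    simp only [Set.mem_setOf_eq, Bform, Pi.add_apply] at *
    linear_combination ha + hb
  zero_mem' := by simp [Bform]
  smul_mem' := by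
    intro c a ha
    simp only [Set.mem_setOf_eq, Bform, Pi.smul_apply, smul_eq_mul] at *
    linear_combination c * ha


/-! ### Auxiliary lemmas -/

section Aux

variable {F : Type} [Field F]

lemma two_eq_zero [Fintype F] (h : Even (Fintype.card F)) : (2:F) = 0 := by
  have h2 : ringChar F = 2 := FiniteField.even_card_iff_char_two.mpr (Nat.even_iff.mp h)
  calc (2:F) = ((2:ℕ):F) := by norm_num
  _ = ((ringChar F : ℕ) : F) := by rw [h2]
  _ = 0 := ringChar.Nat.cast_ringChar

lemma sq_inj (h2 : (2:F) = 0) {x y : F} (h : x*x = y*y) : x = y := by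
  have hxy : (x+y)*(x+y) = 0 := by linear_combination h + (x*y + y*y)*h2
  have h0 : x + y = 0 := by
    rcases mul_eq_zero.mp hxy with h|h <;> exact h
  linear_combination h0 - y*h2

lemma sq_surj [Fintype F] (h2 : (2:F) = 0) (x : F) : ∃ r, r*r = x := by
  have hinj : Function.Injective (fun t : F => t*t) := fun a b hab => sq_inj h2 hab
  exact (Finite.injective_iff_surjective.mp hinj) x

/-- The number of solutions of a nontrivial linear equation. -/
lemma card_linEq [Fintype F] {n : ℕ} (c : Fin n → F) (hc : c ≠ 0) (d : F) :
    Set.ncard {v : Fin n → F | ∑ i, c i * v i = d} = Fintype.card F ^ (n-1) := by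
  classical
  obtain ⟨j, hj⟩ : ∃ j, c j ≠ 0 := by
    by_contra h; push_neg at h; exact hc (funext h)
  set φ : (Fin n → F) →ₗ[F] F :=
    { toFun := fun v => ∑ i, c i * v i
      map_add' := by intro u v; simp [mul_add, Finset.sum_add_distrib]
      map_smul' := by intro t v; simp [Finset.mul_sum]; congr 1; funext i; ring } with hφ
  have hsurj : Function.Surjective φ := by
    intro e
    refine ⟨(e / c j) • (Pi.single j 1 : Fin n → F), ?_⟩
    simp only [hφ, LinearMap.coe_mk, AddHom.coe_mk, Pi.smul_apply, Pi.single_apply, smul_eq_mul]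
    rw [Finset.sum_eq_single j]
    · simp; field_simp
    · intro i _ hij; simp [hij]
    · simp
  obtain ⟨v₀, hv₀⟩ := hsurj d
  have hker : {v : Fin n → F | ∑ i, c i * v i = d} = (fun v => v + v₀) '' (LinearMap.ker φ) := by
    ext v
    simp only [Set.mem_setOf_eq, Set.mem_image, SetLike.mem_coe, LinearMap.mem_ker]
    constructor
    · intro hv
      refine ⟨v - v₀, ?_, by abel⟩
      have hv' : φ v = d := hv
      rw [map_sub, hv', hv₀, sub_self]
    · rintro ⟨u, hu, rfl⟩
      have : φ (u + v₀) = d := by rw [map_add, hu, hv₀, zero_add]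
      simpa [hφ] using this
  rw [hker, Set.ncard_image_of_injective _ (add_left_injective v₀)]
  have hrank : Module.finrank F (LinearMap.ker φ) = n - 1 := by
    have h1 := LinearMap.finrank_range_add_finrank_ker φ
    rw [LinearMap.range_eq_top.mpr hsurj, finrank_top] at h1
    simp [Module.finrank_self, Module.finrank_pi] at h1
    omega
  have hcard : Nat.card (LinearMap.ker φ) = Fintype.card F ^ (n-1) := by
    rw [Nat.card_eq_fintype_card, Module.card_eq_pow_finrank (K := F), hrank]
  rw [← hcard, ← Nat.card_coe_set_eq]
  congr 1

/-- Counting spans of a scaling-invariant set of nonzero vectors. -/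
lemma ncard_spans [Fintype F] {m : Type} [AddCommGroup m] [Module F m] [Fintype m]
    (S : Set m) (h0 : (0:m) ∉ S)
    (hS : ∀ a ∈ S, ∀ t : F, t ≠ 0 → t • a ∈ S) :
    (Fintype.card F - 1) * Set.ncard {P : Submodule F m | ∃ a, a ∈ S ∧ P = Submodule.span F {a}} =
      S.ncard := by
  classical
  have him : {P : Submodule F m | ∃ a, a ∈ S ∧ P = Submodule.span F {a}}
      = ↑(S.toFinset.image (fun a => Submodule.span F {a})) := by
    ext P
    simp only [Set.mem_setOf_eq, Finset.coe_image, Set.mem_image, Finset.mem_coe,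
      Set.mem_toFinset]
    constructor
    · rintro ⟨a, ha, rfl⟩; exact ⟨a, ha, rfl⟩
    · rintro ⟨a, ha, rfl⟩; exact ⟨a, ha, rfl⟩
  rw [him, Set.ncard_coe_finset]
  have hfib := Finset.card_eq_sum_card_fiberwise
    (f := fun a : m => Submodule.span F {a}) (s := S.toFinset)
    (t := S.toFinset.image (fun a => Submodule.span F {a}))
    (fun x hx => Finset.mem_image_of_mem _ hx)
  have hconst : ∀ P ∈ S.toFinset.image (fun a => Submodule.span F {a}),
      (S.toFinset.filter (fun a => Submodule.span F {a} = P)).card = Fintype.card F - 1 := by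
    intro P hP
    obtain ⟨a, ha, rfl⟩ := Finset.mem_image.mp hP
    rw [Set.mem_toFinset] at ha
    have hane : a ≠ 0 := fun h => h0 (h ▸ ha)
    have hset : S.toFinset.filter (fun b => Submodule.span F {b} = Submodule.span F {a})
        = (Finset.univ.filter (fun t : F => t ≠ 0)).image (fun t => t • a) := by
      ext b
      simp only [Finset.mem_filter, Set.mem_toFinset, Finset.mem_image, Finset.mem_univ,
        true_and]
      constructor
      · rintro ⟨hbS, hspan⟩
        have hb : b ∈ Submodule.span F ({a} : Set m) := by
          rw [← hspan]; exact Submodule.mem_span_singleton_self b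
        obtain ⟨t, rfl⟩ := Submodule.mem_span_singleton.mp hb
        have ht : t ≠ 0 := by
          rintro rfl; rw [zero_smul] at hbS; exact h0 hbS
        exact ⟨t, ht, rfl⟩
      · rintro ⟨t, ht, rfl⟩
        refine ⟨hS a ha t ht, ?_⟩
        exact Submodule.span_singleton_smul_eq (IsUnit.mk0 t ht) a
    rw [hset, Finset.card_image_of_injective _ (fun s t hst => by
      exact smul_left_injective F hane hst)]
    simp [Finset.filter_ne', Finset.card_erase_of_mem]
  rw [Set.ncard_eq_toFinset_card', hfib, Finset.sum_congr rfl hconst, Finset.sum_const,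
    smul_eq_mul, mul_comm]

@[simp] lemma mulLin_c0 (b c : Fin 3 → F) : mulLin b c 0 = b 0 * c 0 := rfl
@[simp] lemma mulLin_c1 (b c : Fin 3 → F) : mulLin b c 1 = b 0 * c 1 + b 1 * c 0 := rfl
@[simp] lemma mulLin_c2 (b c : Fin 3 → F) : mulLin b c 2 = b 0 * c 2 + b 2 * c 0 := rfl
@[simp] lemma mulLin_c3 (b c : Fin 3 → F) : mulLin b c 3 = b 1 * c 1 := rfl
@[simp] lemma mulLin_c4 (b c : Fin 3 → F) : mulLin b c 4 = b 1 * c 2 + b 2 * c 1 := rfl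
@[simp] lemma mulLin_c5 (b c : Fin 3 → F) : mulLin b c 5 = b 2 * c 2 := rfl

/-- Evaluation of a linear form. -/
def ev (b X : Fin 3 → F) : F := b 0 * X 0 + b 1 * X 1 + b 2 * X 2

/-- Evaluation of a quadratic form. -/
def evQ (a : Fin 6 → F) (X : Fin 3 → F) : F :=
  a 0 * X 0^2 + a 1 * X 0 * X 1 + a 2 * X 0 * X 2 + a 3 * X 1^2 + a 4 * X 1 * X 2 + a 5 * X 2^2

lemma evQ_mulLin (b c X : Fin 3 → F) : evQ (mulLin b c) X = ev b X * ev c X := by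
  simp [evQ, ev]; ring

lemma mulLin_comm (b c : Fin 3 → F) : mulLin b c = mulLin c b := by
  funext i; fin_cases i <;> simp <;> ring

lemma mulLin_smul_left (t : F) (b c : Fin 3 → F) : mulLin (t • b) c = t • mulLin b c := by
  funext i; fin_cases i <;> simp <;> ring

lemma mulLin_smul_right (t : F) (b c : Fin 3 → F) : mulLin b (t • c) = t • mulLin b c := by
  funext i; fin_cases i <;> simp <;> ring

lemma disc_mulLin (b c : Fin 3 → F) : disc (mulLin b c) = 0 := by
  simp [disc]; ring

lemma disc_smul (t : F) (a : Fin 6 → F) : disc (t • a) = t^3 * disc a := by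
  simp [disc, Pi.smul_apply, smul_eq_mul]; ring

lemma ev_add (b X Y : Fin 3 → F) : ev b (X + Y) = ev b X + ev b Y := by
  simp [ev]; ring

lemma ev_single (b : Fin 3 → F) (k : Fin 3) : ev b (Pi.single k 1) = b k := by
  fin_cases k <;> simp [ev, Pi.single_apply]

lemma exists_ev_ne {b : Fin 3 → F} (hb : b ≠ 0) : ∃ X, ev b X ≠ 0 := by
  obtain ⟨i, hi⟩ : ∃ i, b i ≠ 0 := by
    by_contra h; push_neg at h; exact hb (funext h)
  exact ⟨Pi.single i 1, by rwa [ev_single]⟩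

lemma exists_both_ne {b d : Fin 3 → F} (hb : b ≠ 0) (hd : d ≠ 0) :
    ∃ X, ev b X ≠ 0 ∧ ev d X ≠ 0 := by
  obtain ⟨X, hX⟩ := exists_ev_ne hb
  obtain ⟨Y, hY⟩ := exists_ev_ne hd
  by_cases h1 : ev d X ≠ 0
  · exact ⟨X, hX, h1⟩
  by_cases h2 : ev b Y ≠ 0
  · exact ⟨Y, h2, hY⟩
  push_neg at h1 h2
  exact ⟨X + Y, by rw [ev_add, h2, add_zero]; exact hX,
    by rw [ev_add, h1, zero_add]; exact hY⟩

lemma eq_smul_of_ker_sub {b' b : Fin 3 → F} (hb' : b' ≠ 0)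
    (h : ∀ X, ev b' X = 0 → ev b X = 0) : ∃ t : F, b = t • b' := by
  obtain ⟨i, hi⟩ : ∃ i, b' i ≠ 0 := by
    by_contra hh; push_neg at hh; exact hb' (funext hh)
  refine ⟨b i / b' i, ?_⟩
  funext j
  have hv : ev b' (b' i • (Pi.single j 1 : Fin 3 → F)
      - b' j • (Pi.single i 1 : Fin 3 → F)) = 0 := by
    have e1 : ∀ (d : Fin 3 → F) (s t : F) (U V : Fin 3 → F),
        ev d (s • U - t • V) = s * ev d U - t * ev d V := by
      intro d s t U V; simp [ev, Pi.smul_apply, smul_eq_mul]; ring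
    rw [e1, ev_single, ev_single]; ring
  have hb := h _ hv
  have e1 : ∀ (d : Fin 3 → F) (s t : F) (U V : Fin 3 → F),
      ev d (s • U - t • V) = s * ev d U - t * ev d V := by
    intro d s t U V; simp [ev, Pi.smul_apply, smul_eq_mul]; ring
  rw [e1, ev_single, ev_single] at hb
  have hbij : b' i * b j - b' j * b i = 0 := by linear_combination hb
  simp only [Pi.smul_apply, smul_eq_mul]
  field_simp
  linear_combination hbij

/-- Uniqueness of factorization into linear forms. -/
lemma factor_unique {b c b' c' : Fin 3 → F} (hb : b ≠ 0) (hc : c ≠ 0)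
    (hind : ∀ t : F, c ≠ t • b)
    (h : ∀ X, ev b' X * ev c' X = ev b X * ev c X) :
    (∃ t : F, t ≠ 0 ∧ b' = t • b ∧ c' = t⁻¹ • c) ∨
    (∃ t : F, t ≠ 0 ∧ b' = t • c ∧ c' = t⁻¹ • b) := by
  obtain ⟨X₀, hbX₀, hcX₀⟩ := exists_both_ne hb hc
  have hb' : b' ≠ 0 := by
    rintro rfl
    have := h X₀; simp [ev] at this
    rcases this with h1|h1
    · exact hbX₀ (by simpa [ev] using h1)
    · exact hcX₀ (by simpa [ev] using h1)
  have hc' : c' ≠ 0 := by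
    rintro rfl
    have := h X₀; simp [ev] at this
    rcases this with h1|h1
    · exact hbX₀ (by simpa [ev] using h1)
    · exact hcX₀ (by simpa [ev] using h1)
  have hker : (∀ X, ev b' X = 0 → ev b X = 0) ∨ (∀ X, ev b' X = 0 → ev c X = 0) := by
    by_contra hcon
    push_neg at hcon
    obtain ⟨⟨u, hu0, hu⟩, ⟨v, hv0, hv⟩⟩ := hcon
    have hcu : ev c u = 0 := by
      have := h u; rw [hu0, zero_mul] at this
      rcases mul_eq_zero.mp this.symm with h1|h1
      · exact absurd h1 hu
      · exact h1
    have hbv : ev b v = 0 := by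
      have := h v; rw [hv0, zero_mul] at this
      rcases mul_eq_zero.mp this.symm with h1|h1
      · exact h1
      · exact absurd h1 hv
    have huv : ev b' (u + v) = 0 := by rw [ev_add, hu0, hv0, add_zero]
    have := h (u + v)
    rw [huv, zero_mul, ev_add, ev_add, hbv, hcu, add_zero, zero_add] at this
    exact (mul_ne_zero hu hv) this.symm
  rcases hker with hk | hk
  · obtain ⟨s, hs⟩ := eq_smul_of_ker_sub hb' hk
    have hs0 : s ≠ 0 := by rintro rfl; rw [zero_smul] at hs; exact hb hs
    left
    refine ⟨s⁻¹, inv_ne_zero hs0, ?_, ?_⟩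
    · rw [hs, smul_smul, inv_mul_cancel₀ hs0, one_smul]
    · rw [inv_inv]
      have hd : ∀ X, ev b' X * (ev c' X - s * ev c X) = 0 := by
        intro X
        have hbX : ev b X = s * ev b' X := by rw [hs]; simp [ev]; ring
        have := h X
        rw [hbX] at this
        ring_nf
        ring_nf at this
        linear_combination this
      have hsub : c' - s • c = 0 := by
        by_contra hne
        obtain ⟨X, hX1, hX2⟩ := exists_both_ne hb' hne
        apply hX2
        have e2 : ev (c' - s • c) X = ev c' X - s * ev c X := by
          simp [ev, Pi.smul_apply, smul_eq_mul]; ring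
        rw [e2]
        rcases mul_eq_zero.mp (hd X) with h1|h1
        · exact absurd h1 hX1
        · exact h1
      exact sub_eq_zero.mp hsub
  · obtain ⟨s, hs⟩ := eq_smul_of_ker_sub hb' hk
    have hs0 : s ≠ 0 := by rintro rfl; rw [zero_smul] at hs; exact hc hs
    right
    refine ⟨s⁻¹, inv_ne_zero hs0, ?_, ?_⟩
    · rw [hs, smul_smul, inv_mul_cancel₀ hs0, one_smul]
    · rw [inv_inv]
      have hd : ∀ X, ev b' X * (ev c' X - s * ev b X) = 0 := by
        intro X
        have hcX : ev c X = s * ev b' X := by rw [hs]; simp [ev]; ring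
        have := h X
        rw [hcX] at this
        linear_combination this
      have hsub : c' - s • b = 0 := by
        by_contra hne
        obtain ⟨X, hX1, hX2⟩ := exists_both_ne hb' hne
        apply hX2
        have e2 : ev (c' - s • b) X = ev c' X - s * ev b X := by
          simp [ev, Pi.smul_apply, smul_eq_mul]; ring
        rw [e2]
        rcases mul_eq_zero.mp (hd X) with h1|h1
        · exact absurd h1 hX1
        · exact h1
      exact sub_eq_zero.mp hsub

/-- the "not proportional either way" predicate -/
def NP (b c : Fin 3 → F) : Prop :=
  (¬ ∃ t : F, c = t • b) ∧ (¬ ∃ t : F, b = t • c)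

lemma NP_iff {b c : Fin 3 → F} : NP b c ↔ b ≠ 0 ∧ ¬ ∃ t : F, c = t • b := by
  constructor
  · rintro ⟨hA, hB⟩
    refine ⟨?_, hA⟩
    rintro rfl
    exact hB ⟨0, by simp⟩
  · rintro ⟨hb, hA⟩
    refine ⟨hA, ?_⟩
    rintro ⟨t, rfl⟩
    have ht : t ≠ 0 := by rintro rfl; simp at hb
    exact hA ⟨t⁻¹, by rw [smul_smul, inv_mul_cancel₀ ht, one_smul]⟩

lemma NP_nonzero {b c : Fin 3 → F} (h : NP b c) : b ≠ 0 ∧ c ≠ 0 := by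
  obtain ⟨h1, h2⟩ := h
  constructor
  · rintro rfl; exact h2 ⟨0, by simp⟩
  · rintro rfl; exact h1 ⟨0, by simp⟩

lemma mulLin_ne_zero {b c : Fin 3 → F} (hb : b ≠ 0) (hc : c ≠ 0) : mulLin b c ≠ 0 := by
  intro hcon
  obtain ⟨X, hX1, hX2⟩ := exists_both_ne hb hc
  apply mul_ne_zero hX1 hX2
  rw [← evQ_mulLin, hcon]
  simp [evQ]

lemma mulLin_smul_smul {t : F} (ht : t ≠ 0) (b c : Fin 3 → F) :
    mulLin (t • b) (t⁻¹ • c) = mulLin b c := by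
  rw [mulLin_smul_left, mulLin_smul_right, smul_smul, mul_inv_cancel₀ ht, one_smul]

def kap (y : Fin 6 → F) (b : Fin 3 → F) : Fin 3 → F :=
  ![y 1 * b 1 + y 2 * b 2, y 1 * b 0 + y 4 * b 2, y 2 * b 0 + y 4 * b 1]

lemma Bform_mulLin (y : Fin 6 → F) (h0 : y 0 = 0) (h3 : y 3 = 0) (h5 : y 5 = 0)
    (b c : Fin 3 → F) : Bform (mulLin b c) y = ∑ i, kap y b i * c i := by
  simp [Bform, kap, Fin.sum_univ_three, h0, h3, h5]
  ring

lemma kap_smul (y : Fin 6 → F) (s : F) (b : Fin 3 → F) :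
    kap y (s • b) = s • kap y b := by
  funext i; fin_cases i <;> simp [kap] <;> ring

lemma kap_dot_self (h2 : (2:F) = 0) (y : Fin 6 → F) (b : Fin 3 → F) :
    ∑ i, kap y b i * b i = 0 := by
  simp only [kap, Fin.sum_univ_three]
  simp only [Matrix.cons_val_zero, Matrix.cons_val_one, Matrix.head_cons,
    Matrix.cons_val_two, Matrix.tail_cons]
  linear_combination (y 1 * b 0 * b 1 + y 2 * b 0 * b 2 + y 4 * b 1 * b 2) * h2

lemma kap_eq_zero_iff (h2 : (2:F) = 0) (y : Fin 6 → F)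
    (hw : (![y 4, y 2, y 1] : Fin 3 → F) ≠ 0) (b : Fin 3 → F) :
    kap y b = 0 ↔ ∃ s : F, b = s • (![y 4, y 2, y 1] : Fin 3 → F) := by
  constructor
  · intro hk
    have e0 := congrFun hk 0
    have e1 := congrFun hk 1
    have e2 := congrFun hk 2
    simp only [kap, Matrix.cons_val_zero, Matrix.cons_val_one, Matrix.head_cons,
      Matrix.cons_val_two, Matrix.tail_cons, Pi.zero_apply] at e0 e1 e2
    by_cases h4 : y 4 ≠ 0
    · refine ⟨b 0 / y 4, ?_⟩
      have hc0 : b 0 = b 0 / y 4 * y 4 := by field_simp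
      have hc1 : b 1 = b 0 / y 4 * y 2 := by
        rw [div_mul_eq_mul_div, eq_div_iff h4]
        linear_combination -e2 + y 4 * b 1 * h2
      have hc2 : b 2 = b 0 / y 4 * y 1 := by
        rw [div_mul_eq_mul_div, eq_div_iff h4]
        linear_combination -e1 + y 4 * b 2 * h2
      funext i; fin_cases i
      exacts [hc0, hc1, hc2]
    · push_neg at h4
      by_cases hy2 : y 2 ≠ 0
      · refine ⟨b 1 / y 2, ?_⟩
        have hb0 : b 0 = 0 := by
          have h20 : y 2 * b 0 = 0 := by linear_combination e2 - b 1 * h4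
          rcases mul_eq_zero.mp h20 with h|h
          · exact absurd h hy2
          · exact h
        have hc0 : b 0 = b 1 / y 2 * y 4 := by rw [h4, mul_zero]; exact hb0
        have hc1 : b 1 = b 1 / y 2 * y 2 := by field_simp
        have hc2 : b 2 = b 1 / y 2 * y 1 := by
          rw [div_mul_eq_mul_div, eq_div_iff hy2]
          linear_combination -e0 + y 2 * b 2 * h2
        funext i; fin_cases i
        exacts [hc0, hc1, hc2]
      · push_neg at hy2
        by_cases hy1 : y 1 ≠ 0
        · refine ⟨b 2 / y 1, ?_⟩
          have hb0 : b 0 = 0 := by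
            have h10 : y 1 * b 0 = 0 := by linear_combination e1 - b 2 * h4
            rcases mul_eq_zero.mp h10 with h|h
            · exact absurd h hy1
            · exact h
          have hb1 : b 1 = 0 := by
            have h10 : y 1 * b 1 = 0 := by linear_combination e0 - b 2 * hy2
            rcases mul_eq_zero.mp h10 with h|h
            · exact absurd h hy1
            · exact h
          have hc0 : b 0 = b 2 / y 1 * y 4 := by rw [h4, mul_zero]; exact hb0
          have hc1 : b 1 = b 2 / y 1 * y 2 := by rw [hy2, mul_zero]; exact hb1
          have hc2 : b 2 = b 2 / y 1 * y 1 := by field_simp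
          funext i; fin_cases i
          exacts [hc0, hc1, hc2]
        · push_neg at hy1
          exfalso
          apply hw
          funext i; fin_cases i
          exacts [h4, hy2, hy1]
  · rintro ⟨s, rfl⟩
    rw [kap_smul]
    have hz : kap y (![y 4, y 2, y 1] : Fin 3 → F) = 0 := by
      have k0 : y 1 * y 2 + y 2 * y 1 = 0 := by linear_combination y 1 * y 2 * h2
      have k1 : y 1 * y 4 + y 4 * y 1 = 0 := by linear_combination y 1 * y 4 * h2
      have k2 : y 2 * y 4 + y 4 * y 2 = 0 := by linear_combination y 2 * y 4 * h2
      funext i; fin_cases i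
      exacts [k0, k1, k2]
    rw [hz, smul_zero]

/-- counting vectors with three pinned coordinates -/
lemma card_pinned (v : Fin 3 → F) (P : (Fin 3 → F) → Prop) :
    Set.ncard {a : Fin 6 → F | a 1 = v 0 ∧ a 2 = v 1 ∧ a 4 = v 2 ∧ P ![a 0, a 3, a 5]}
      = Set.ncard {u : Fin 3 → F | P u} := by
  have himg : {a : Fin 6 → F | a 1 = v 0 ∧ a 2 = v 1 ∧ a 4 = v 2 ∧ P ![a 0, a 3, a 5]}
      = (fun u : Fin 3 → F => ![u 0, v 0, v 1, u 1, v 2, u 2]) '' {u | P u} := by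
    ext a
    simp only [Set.mem_setOf_eq, Set.mem_image]
    constructor
    · rintro ⟨h1, h2, h4, hP⟩
      refine ⟨![a 0, a 3, a 5], hP, ?_⟩
      funext i
      fin_cases i
      · rfl
      · exact h1.symm
      · exact h2.symm
      · rfl
      · exact h4.symm
      · rfl
    · rintro ⟨u, hu, rfl⟩
      refine ⟨rfl, rfl, rfl, ?_⟩
      have he : (![![u 0, v 0, v 1, u 1, v 2, u 2] 0, ![u 0, v 0, v 1, u 1, v 2, u 2] 3,
          ![u 0, v 0, v 1, u 1, v 2, u 2] 5] : Fin 3 → F) = u := by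
        funext i; fin_cases i <;> rfl
      rw [he]; exact hu
  rw [himg]
  apply Set.ncard_image_of_injective
  intro u u' huu
  funext i
  have e0 := congrFun huu 0
  have e1 := congrFun huu 3
  have e2 := congrFun huu 5
  simp only [Matrix.cons_val_zero] at e0
  fin_cases i
  · exact e0
  · exact e1
  · exact e2

lemma card_sing [Fintype F] (h2 : (2:F) = 0) (y : Fin 6 → F) (hy : y ≠ 0)
    (h0 : y 0 = 0) (h3 : y 3 = 0) (h5 : y 5 = 0) :
    Set.ncard {a : Fin 6 → F | Bform a y = 0 ∧ disc a = 0} + Fintype.card F ^ 2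
      = Fintype.card F ^ 4 + Fintype.card F ^ 3 := by
  classical
  set q := Fintype.card F with hqdef
  have h4 : (4:F) = 0 := by linear_combination 2 * h2
  set g : (Fin 6 → F) → (Fin 3 → F) := fun a => ![a 1, a 2, a 4] with hg
  set S : Finset (Fin 6 → F) :=
    Finset.univ.filter (fun a => Bform a y = 0 ∧ disc a = 0) with hS
  have hSn : Set.ncard {a : Fin 6 → F | Bform a y = 0 ∧ disc a = 0} = S.card := by
    rw [Set.ncard_eq_toFinset_card']; congr 1; ext a; simp [hS]
  set K : Finset (Fin 3 → F) :=
    Finset.univ.filter (fun v => y 1 * v 0 + y 2 * v 1 + y 4 * v 2 = 0) with hK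
  have hyv : (![y 1, y 2, y 4] : Fin 3 → F) ≠ 0 := by
    intro hcon
    apply hy
    have e1 := congrFun hcon 0
    have e2 := congrFun hcon 1
    have e3 := congrFun hcon 2
    simp at e1 e2 e3
    funext i
    fin_cases i <;> simp [*]
  have hKcard : K.card = q ^ 2 := by
    have hle := card_linEq (F := F) ![y 1, y 2, y 4] hyv 0
    rw [Set.ncard_eq_toFinset_card'] at hle
    rw [← hle]
    congr 1
    ext v
    simp [hK, Fin.sum_univ_three]
  have hmem : ∀ a ∈ S, g a ∈ K := by
    intro a ha
    simp only [hS, Finset.mem_filter, Finset.mem_univ, true_and] at ha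
    simp only [hK, Finset.mem_filter, Finset.mem_univ, true_and, hg]
    have hB := ha.1
    simp only [Bform] at hB
    show y 1 * a 1 + y 2 * a 2 + y 4 * a 4 = 0
    rw [h0, h3, h5] at hB
    linear_combination hB
  have hfib := Finset.card_eq_sum_card_fiberwise hmem
  have hfibcard : ∀ v ∈ K, (S.filter (fun a => g a = v)).card
      = if v = 0 then q^3 else q^2 := by
    intro v hv
    simp only [hK, Finset.mem_filter, Finset.mem_univ, true_and] at hv
    by_cases hv0 : v = 0
    · subst hv0
      rw [if_pos rfl]
      have hset : (S.filter (fun a => g a = 0)) =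
          Set.toFinset {a : Fin 6 → F | a 1 = (0:Fin 3 → F) 0 ∧ a 2 = (0:Fin 3 → F) 1 ∧
            a 4 = (0:Fin 3 → F) 2 ∧ (fun _ => True) ![a 0, a 3, a 5]} := by
        ext a
        simp only [hS, Finset.mem_filter, Finset.mem_univ, true_and, Set.mem_toFinset,
          Set.mem_setOf_eq, Pi.zero_apply, hg]
        constructor
        · rintro ⟨⟨hB, hd⟩, hgv⟩
          have e1 := congrFun hgv 0
          have e2 := congrFun hgv 1
          have e3 := congrFun hgv 2
          exact ⟨e1, e2, e3, trivial⟩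
        · rintro ⟨e1, e2, e3, -⟩
          refine ⟨⟨?_, ?_⟩, ?_⟩
          · simp only [Bform]; rw [h0, h3, h5, e1, e2, e3]; ring
          · simp only [disc]; rw [e1, e2, e3, h4]; ring
          · funext i; fin_cases i <;> simpa
      rw [hset, ← Set.ncard_eq_toFinset_card',
        card_pinned (0 : Fin 3 → F) (fun _ => True)]
      simp only [Set.setOf_true, Set.ncard_univ, Nat.card_eq_fintype_card]
      rw [Fintype.card_fun]
      simp [hqdef]
    · rw [if_neg hv0]
      set c : Fin 3 → F := ![v 2 * v 2, v 1 * v 1, v 0 * v 0] with hc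
      have hcne : c ≠ 0 := by
        intro hcon
        apply hv0
        have e1 := congrFun hcon 0
        have e2 := congrFun hcon 1
        have e3 := congrFun hcon 2
        simp only [hc, Matrix.cons_val_zero, Matrix.cons_val_one, Matrix.head_cons,
          Matrix.cons_val_two, Matrix.tail_cons, Pi.zero_apply] at e1 e2 e3
        funext i
        fin_cases i
        · simpa using mul_self_eq_zero.mp e3
        · simpa using mul_self_eq_zero.mp e2
        · simpa using mul_self_eq_zero.mp e1
      have hset : (S.filter (fun a => g a = v)) =
          Set.toFinset {a : Fin 6 → F | a 1 = v 0 ∧ a 2 = v 1 ∧ a 4 = v 2 ∧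
            (fun u : Fin 3 → F => ∑ i, c i * u i = v 0 * v 1 * v 2) ![a 0, a 3, a 5]} := by
        ext a
        simp only [hS, Finset.mem_filter, Finset.mem_univ, true_and, Set.mem_toFinset,
          Set.mem_setOf_eq, hg, Fin.sum_univ_three, hc]
        simp only [Matrix.cons_val_zero, Matrix.cons_val_one, Matrix.head_cons]
        constructor
        · rintro ⟨⟨hB, hd⟩, hgv⟩
          have e1 := congrFun hgv 0
          have e2 := congrFun hgv 1
          have e3 := congrFun hgv 2
          simp only [Matrix.cons_val_zero, Matrix.cons_val_one, Matrix.head_cons,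
            Matrix.cons_val_two, Matrix.tail_cons] at e1 e2 e3
          refine ⟨e1, e2, e3, ?_⟩
          show v 2 * v 2 * a 0 + v 1 * v 1 * a 3 + v 0 * v 0 * a 5 = v 0 * v 1 * v 2
          simp only [disc] at hd
          rw [e1, e2, e3] at hd
          linear_combination -hd + a 0 * a 3 * a 5 * h4
        · rintro ⟨e1, e2, e3, heq⟩
          have heq' : v 2 * v 2 * a 0 + v 1 * v 1 * a 3 + v 0 * v 0 * a 5
              = v 0 * v 1 * v 2 := heq
          refine ⟨⟨?_, ?_⟩, ?_⟩
          · simp only [Bform]; rw [h0, h3, h5, e1, e2, e3]; linear_combination hv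
          · simp only [disc]; rw [e1, e2, e3]
            linear_combination -heq' + a 0 * a 3 * a 5 * h4
          · funext i; fin_cases i <;> simpa
      rw [hset, ← Set.ncard_eq_toFinset_card',
        card_pinned v (fun u : Fin 3 → F => ∑ i, c i * u i = v 0 * v 1 * v 2),
        card_linEq c hcne]
  have h0K : (0 : Fin 3 → F) ∈ K := by simp [hK]
  rw [hSn, hfib, Finset.sum_congr rfl hfibcard, ← Finset.add_sum_erase K _ h0K]
  rw [if_pos rfl]
  have herase : ∑ v ∈ K.erase 0, (if v = 0 then q^3 else q^2) = (q^2 - 1) * q^2 := by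
    rw [Finset.sum_congr rfl (fun v hv => if_neg (Finset.ne_of_mem_erase hv)),
      Finset.sum_const, Finset.card_erase_of_mem h0K, hKcard, smul_eq_mul]
  rw [herase]
  have hqpos : 1 ≤ q ^ 2 := Nat.one_le_pow _ _ Fintype.card_pos
  have hkey : (q^2 - 1) * q^2 + q^2 = q^4 := by
    have h4' : q^4 = q^2 * q^2 := by ring
    obtain ⟨k, hk⟩ := Nat.exists_eq_add_of_le hqpos
    rw [h4', hk, Nat.add_sub_cancel_left]
    ring
  rw [add_assoc, hkey]
  ring

open scoped Classical in
lemma smul_span_card [Fintype F] (b : Fin 3 → F) (hb : b ≠ 0) :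
    (Finset.univ.filter (fun c : Fin 3 → F => ∃ t : F, c = t • b)).card = Fintype.card F := by
  have himg : Finset.univ.filter (fun c : Fin 3 → F => ∃ t : F, c = t • b)
      = Finset.univ.image (fun t : F => t • b) := by
    ext c
    simp only [Finset.mem_filter, Finset.mem_univ, true_and, Finset.mem_image]
    constructor
    · rintro ⟨t, rfl⟩; exact ⟨t, rfl⟩
    · rintro ⟨t, rfl⟩; exact ⟨t, rfl⟩
  rw [himg, Finset.card_image_of_injective _ (smul_left_injective F hb), Finset.card_univ]

open scoped Classical in
lemma card_pairs [Fintype F] (h2 : (2:F) = 0) (y : Fin 6 → F) (hy : y ≠ 0)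
    (h0 : y 0 = 0) (h3 : y 3 = 0) (h5 : y 5 = 0) :
    (Finset.univ.filter (fun p : (Fin 3 → F) × (Fin 3 → F) =>
        NP p.1 p.2 ∧ Bform (mulLin p.1 p.2) y = 0)).card
      = (Fintype.card F - 1) * (Fintype.card F ^ 3 - Fintype.card F)
        + (Fintype.card F ^ 3 - Fintype.card F) * (Fintype.card F ^ 2 - Fintype.card F) := by
  set q := Fintype.card F with hqdef
  set w : Fin 3 → F := ![y 4, y 2, y 1] with hwdef
  have hw : w ≠ 0 := by
    intro hcon
    apply hy
    have e1 := congrFun hcon 0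
    have e2 := congrFun hcon 1
    have e3 := congrFun hcon 2
    simp only [hwdef, Matrix.cons_val_zero, Matrix.cons_val_one, Matrix.head_cons,
      Matrix.cons_val_two, Matrix.tail_cons, Pi.zero_apply] at e1 e2 e3
    funext i
    fin_cases i <;> simp [*]
  set P : Finset ((Fin 3 → F) × (Fin 3 → F)) :=
    Finset.univ.filter (fun p => NP p.1 p.2 ∧ Bform (mulLin p.1 p.2) y = 0) with hP
  have hfib := Finset.card_eq_sum_card_fiberwise
    (f := fun p : (Fin 3 → F) × (Fin 3 → F) => p.1) (s := P) (t := Finset.univ)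
    (fun p _ => Finset.mem_univ _)
  have hfibcard : ∀ b : Fin 3 → F,
      (P.filter (fun p => p.1 = b)).card
        = if kap y b = 0 then (if b = 0 then 0 else q^3 - q) else q^2 - q := by
    intro b
    have hbij : (P.filter (fun p => p.1 = b)).card
        = (Finset.univ.filter (fun c : Fin 3 → F =>
            NP b c ∧ ∑ i, kap y b i * c i = 0)).card := by
      apply Finset.card_nbij (i := fun p => p.2)
      · rintro ⟨b', c⟩ hp
        simp only [Finset.mem_coe, Finset.mem_filter, Finset.mem_univ, true_and, hP] at hp
        obtain ⟨⟨hnp, hB⟩, rfl⟩ := hp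
        simp only [Finset.mem_coe, Finset.mem_filter, Finset.mem_univ, true_and]
        rw [Bform_mulLin y h0 h3 h5] at hB
        exact ⟨hnp, hB⟩
      · rintro ⟨b1, c1⟩ hp1 ⟨b2, c2⟩ hp2 hcc
        simp only [Finset.coe_filter, Set.mem_setOf_eq, Finset.mem_filter,
          Finset.mem_univ, true_and, hP] at hp1 hp2
        simp only at hcc
        rw [Prod.mk.injEq]
        exact ⟨hp1.2.trans hp2.2.symm, hcc⟩
      · intro c hc
        simp only [Finset.coe_filter, Set.mem_setOf_eq, Finset.mem_univ, true_and] at hc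
        refine ⟨(b, c), ?_, rfl⟩
        have hmm : (b, c) ∈ P.filter (fun p => p.1 = b) := by
          simp only [hP, Finset.mem_filter, Finset.mem_univ, true_and]
          exact ⟨⟨hc.1, by rw [Bform_mulLin y h0 h3 h5]; exact hc.2⟩, trivial⟩
        exact Finset.mem_coe.mpr hmm
    rw [hbij]
    by_cases hk : kap y b = 0
    · rw [if_pos hk]
      by_cases hb : b = 0
      · rw [if_pos hb]
        subst hb
        rw [Finset.card_eq_zero]
        ext c
        simp only [Finset.mem_filter, Finset.mem_univ, true_and, Finset.notMem_empty,
          iff_false, not_and]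
        intro hnp
        exact absurd rfl (NP_iff.mp hnp).1
      · rw [if_neg hb]
        have hset : Finset.univ.filter (fun c : Fin 3 → F =>
            NP b c ∧ ∑ i, kap y b i * c i = 0)
            = Finset.univ \ Finset.univ.filter (fun c : Fin 3 → F => ∃ t : F, c = t • b) := by
          ext c
          simp only [Finset.mem_filter, Finset.mem_univ, true_and, Finset.mem_sdiff]
          constructor
          · rintro ⟨hnp, -⟩
            simpa using (NP_iff.mp hnp).2
          · intro hns
            refine ⟨NP_iff.mpr ⟨hb, by simpa using hns⟩, ?_⟩
            rw [hk]
            simp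
        rw [hset, Finset.card_sdiff_of_subset (Finset.subset_univ _),
          Finset.card_univ, smul_span_card b hb, Fintype.card_fun]
        simp [hqdef]
    · rw [if_neg hk]
      have hb : b ≠ 0 := by
        rintro rfl
        apply hk
        funext i; fin_cases i <;> simp [kap]
      have hsub : Finset.univ.filter (fun c : Fin 3 → F => ∃ t : F, c = t • b)
          ⊆ Finset.univ.filter (fun c : Fin 3 → F => ∑ i, kap y b i * c i = 0) := by
        intro c hc
        simp only [Finset.mem_filter, Finset.mem_univ, true_and] at hc ⊢
        obtain ⟨t, rfl⟩ := hc
        have hterm : ∀ i : Fin 3, kap y b i * (t • b) i = t * (kap y b i * b i) := by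
          intro i
          simp only [Pi.smul_apply, smul_eq_mul]
          ring
        rw [Finset.sum_congr rfl (fun i _ => hterm i), ← Finset.mul_sum,
          kap_dot_self h2, mul_zero]
      have hset : Finset.univ.filter (fun c : Fin 3 → F =>
          NP b c ∧ ∑ i, kap y b i * c i = 0)
          = Finset.univ.filter (fun c : Fin 3 → F => ∑ i, kap y b i * c i = 0)
            \ Finset.univ.filter (fun c : Fin 3 → F => ∃ t : F, c = t • b) := by
        ext c
        simp only [Finset.mem_filter, Finset.mem_univ, true_and, Finset.mem_sdiff]
        constructor
        · rintro ⟨hnp, hsum⟩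
          exact ⟨hsum, by simpa using (NP_iff.mp hnp).2⟩
        · rintro ⟨hsum, hns⟩
          exact ⟨NP_iff.mpr ⟨hb, by simpa using hns⟩, hsum⟩
      rw [hset, Finset.card_sdiff_of_subset hsub, smul_span_card b hb]
      have hsol : (Finset.univ.filter
          (fun c : Fin 3 → F => ∑ i, kap y b i * c i = 0)).card = q^2 := by
        have hle := card_linEq (kap y b) hk 0
        rw [Set.ncard_eq_toFinset_card'] at hle
        rw [← hle]
        congr 1
        ext c
        simp
      rw [hsol]
  have hsplit : ∑ b : Fin 3 → F, (P.filter (fun p => p.1 = b)).card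
      = ∑ b ∈ Finset.univ.filter (fun b : Fin 3 → F => kap y b = 0),
          (P.filter (fun p => p.1 = b)).card
        + ∑ b ∈ Finset.univ.filter (fun b : Fin 3 → F => ¬ kap y b = 0),
          (P.filter (fun p => p.1 = b)).card :=
    (Finset.sum_filter_add_sum_filter_not _ _ _).symm
  set K0 : Finset (Fin 3 → F) := Finset.univ.filter (fun b => kap y b = 0) with hK0
  have hK0card : K0.card = q := by
    have himg : K0 = Finset.univ.image (fun s : F => s • w) := by
      ext b
      simp only [hK0, Finset.mem_filter, Finset.mem_univ, true_and, Finset.mem_image]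
      rw [kap_eq_zero_iff h2 y hw]
      constructor
      · rintro ⟨s, rfl⟩; exact ⟨s, rfl⟩
      · rintro ⟨s, rfl⟩; exact ⟨s, rfl⟩
    rw [himg, Finset.card_image_of_injective _ (smul_left_injective F hw), Finset.card_univ]
  have h0K0 : (0 : Fin 3 → F) ∈ K0 := by
    simp only [hK0, Finset.mem_filter, Finset.mem_univ, true_and]
    rw [kap_eq_zero_iff h2 y hw]
    exact ⟨0, by simp⟩
  have hsum0 : ∑ b ∈ K0, (P.filter (fun p => p.1 = b)).card = (q - 1) * (q^3 - q) := by
    rw [← Finset.add_sum_erase K0 _ h0K0]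
    rw [hfibcard 0, if_pos, if_pos rfl]
    · rw [Finset.sum_congr rfl (fun b hb => ?_), Finset.sum_const,
        Finset.card_erase_of_mem h0K0, hK0card, smul_eq_mul, zero_add]
      rw [hfibcard b]
      have hbK := Finset.mem_of_mem_erase hb
      simp only [hK0, Finset.mem_filter, Finset.mem_univ, true_and] at hbK
      rw [if_pos hbK, if_neg (Finset.ne_of_mem_erase hb)]
    · rw [kap_eq_zero_iff h2 y hw]
      exact ⟨0, by simp⟩
  have hsum1 : ∑ b ∈ Finset.univ.filter (fun b : Fin 3 → F => ¬ kap y b = 0),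
      (P.filter (fun p => p.1 = b)).card = (q^3 - q) * (q^2 - q) := by
    rw [Finset.sum_congr rfl (fun b hb => ?_), Finset.sum_const, smul_eq_mul]
    · congr 1
      have hcompl : (Finset.univ.filter (fun b : Fin 3 → F => ¬ kap y b = 0))
          = Finset.univ \ K0 := by
        ext b; simp [hK0]
      rw [hcompl, Finset.card_sdiff_of_subset (Finset.subset_univ _), Finset.card_univ, hK0card,
        Fintype.card_fun]
      simp [hqdef]
    · simp only [Finset.mem_filter, Finset.mem_univ, true_and] at hb
      rw [hfibcard b, if_neg hb]
  rw [hfib, hsplit, hsum0, hsum1]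

open scoped Classical in
lemma card_pairs_fiber [Fintype F] (y : Fin 6 → F) :
    (Finset.univ.filter (fun p : (Fin 3 → F) × (Fin 3 → F) =>
        NP p.1 p.2 ∧ Bform (mulLin p.1 p.2) y = 0)).card
      = 2 * (Fintype.card F - 1)
        * Set.ncard {a : Fin 6 → F | a ≠ 0 ∧ Bform a y = 0 ∧ IsRealPair a} := by
  set q := Fintype.card F with hqdef
  set P : Finset ((Fin 3 → F) × (Fin 3 → F)) :=
    Finset.univ.filter (fun p => NP p.1 p.2 ∧ Bform (mulLin p.1 p.2) y = 0) with hP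
  set A : Finset (Fin 6 → F) :=
    Set.toFinset {a : Fin 6 → F | a ≠ 0 ∧ Bform a y = 0 ∧ IsRealPair a} with hA
  have hAn : Set.ncard {a : Fin 6 → F | a ≠ 0 ∧ Bform a y = 0 ∧ IsRealPair a} = A.card := by
    rw [Set.ncard_eq_toFinset_card']
  have hmem : ∀ p ∈ P, mulLin p.1 p.2 ∈ A := by
    rintro ⟨b, c⟩ hp
    simp only [hP, Finset.mem_filter, Finset.mem_univ, true_and] at hp
    obtain ⟨hnp, hB⟩ := hp
    obtain ⟨hb, hc⟩ := NP_nonzero hnp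
    simp only [hA, Set.mem_toFinset, Set.mem_setOf_eq]
    exact ⟨mulLin_ne_zero hb hc, hB, ⟨b, c, hnp.1, hnp.2, rfl⟩⟩
  have hfib := Finset.card_eq_sum_card_fiberwise
    (f := fun p : (Fin 3 → F) × (Fin 3 → F) => mulLin p.1 p.2) (s := P) (t := A) hmem
  have hfibcard : ∀ a ∈ A, (P.filter (fun p => mulLin p.1 p.2 = a)).card = 2 * (q - 1) := by
    intro a ha
    simp only [hA, Set.mem_toFinset, Set.mem_setOf_eq] at ha
    obtain ⟨hane, hB, l1, l2, hn1, hn2, rfl⟩ := ha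
    have hl1 : l1 ≠ 0 := (NP_nonzero ⟨hn1, hn2⟩).1
    have hl2 : l2 ≠ 0 := (NP_nonzero ⟨hn1, hn2⟩).2
    set T : Finset F := Finset.univ.filter (fun t : F => t ≠ 0) with hT
    have hTcard : T.card = q - 1 := by
      rw [hT, Finset.filter_ne', Finset.card_erase_of_mem (Finset.mem_univ _),
        Finset.card_univ]
    have hset : P.filter (fun p => mulLin p.1 p.2 = mulLin l1 l2)
        = T.image (fun t => (t • l1, t⁻¹ • l2)) ∪ T.image (fun t => (t • l2, t⁻¹ • l1)) := by
      ext ⟨b, c⟩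
      simp only [Finset.mem_union, Finset.mem_image, hT, Finset.mem_filter, Finset.mem_univ,
        true_and, hP]
      constructor
      · rintro ⟨⟨hnp, hBp⟩, heq⟩
        have hEv : ∀ X, ev b X * ev c X = ev l1 X * ev l2 X := by
          intro X
          rw [← evQ_mulLin, ← evQ_mulLin, heq]
        have hind : ∀ t : F, l2 ≠ t • l1 := by
          intro t hcon; exact hn1 ⟨t, hcon⟩
        rcases factor_unique hl1 hl2 hind hEv with ⟨t, ht, hbt, hct⟩ | ⟨t, ht, hbt, hct⟩
        · exact Or.inl ⟨t, ht, by rw [Prod.mk.injEq]; exact ⟨hbt.symm, hct.symm⟩⟩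
        · exact Or.inr ⟨t, ht, by rw [Prod.mk.injEq]; exact ⟨hbt.symm, hct.symm⟩⟩
      · rintro (⟨t, ht, heq⟩ | ⟨t, ht, heq⟩)
        · obtain ⟨h1, h2⟩ := Prod.ext_iff.mp heq
          subst h1; subst h2
          have hkey := mulLin_smul_smul ht l1 l2
          refine ⟨⟨⟨?_, ?_⟩, ?_⟩, hkey⟩
          · rintro ⟨s, hs⟩
            have hll : l2 = (t * (s * t)) • l1 := by
              have h' := congrArg (fun v : Fin 3 → F => t • v) hs
              simpa [smul_smul, mul_inv_cancel₀ ht] using h'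
            exact hn1 ⟨t * (s * t), hll⟩
          · rintro ⟨s, hs⟩
            have hll : l1 = (t⁻¹ * (s * t⁻¹)) • l2 := by
              have h' := congrArg (fun v : Fin 3 → F => t⁻¹ • v) hs
              simpa [smul_smul, inv_mul_cancel₀ ht] using h'
            exact hn2 ⟨t⁻¹ * (s * t⁻¹), hll⟩
          · rw [hkey]; exact hB
        · obtain ⟨h1, h2⟩ := Prod.ext_iff.mp heq
          subst h1; subst h2
          have hkey : mulLin (t • l2) (t⁻¹ • l1) = mulLin l1 l2 := by
            rw [mulLin_smul_smul ht l2 l1, mulLin_comm]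
          refine ⟨⟨⟨?_, ?_⟩, ?_⟩, hkey⟩
          · rintro ⟨s, hs⟩
            have hll : l1 = (t * (s * t)) • l2 := by
              have h' := congrArg (fun v : Fin 3 → F => t • v) hs
              simpa [smul_smul, mul_inv_cancel₀ ht] using h'
            exact hn2 ⟨t * (s * t), hll⟩
          · rintro ⟨s, hs⟩
            have hll : l2 = (t⁻¹ * (s * t⁻¹)) • l1 := by
              have h' := congrArg (fun v : Fin 3 → F => t⁻¹ • v) hs
              simpa [smul_smul, inv_mul_cancel₀ ht] using h'
            exact hn1 ⟨t⁻¹ * (s * t⁻¹), hll⟩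
          · rw [hkey]; exact hB
    have hinj1 : Function.Injective (fun t : F => (t • l1, t⁻¹ • l2)) := by
      intro t s hts
      exact smul_left_injective F hl1 (congrArg Prod.fst hts)
    have hinj2 : Function.Injective (fun t : F => (t • l2, t⁻¹ • l1)) := by
      intro t s hts
      exact smul_left_injective F hl2 (congrArg Prod.fst hts)
    have hdisj : Disjoint (T.image (fun t => (t • l1, t⁻¹ • l2)))
        (T.image (fun t => (t • l2, t⁻¹ • l1))) := by
      rw [Finset.disjoint_left]
      rintro p hp1 hp2
      simp only [Finset.mem_image, hT, Finset.mem_filter, Finset.mem_univ, true_and] at hp1 hp2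
      obtain ⟨t, ht, rfl⟩ := hp1
      obtain ⟨s, hs, hp⟩ := hp2
      have hfst : s • l2 = t • l1 := congrArg Prod.fst hp
      apply hn1
      refine ⟨s⁻¹ * t, ?_⟩
      have h' := congrArg (fun v : Fin 3 → F => s⁻¹ • v) hfst
      simpa [smul_smul, inv_mul_cancel₀ hs] using h'
    rw [hset, Finset.card_union_of_disjoint hdisj,
      Finset.card_image_of_injective _ hinj1, Finset.card_image_of_injective _ hinj2,
      hTcard]
    ring
  rw [hfib, Finset.sum_congr rfl hfibcard, Finset.sum_const, smul_eq_mul, hAn]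
  ring

/-- In characteristic two, double lines are exactly the nonzero diagonal forms. -/
lemma isDoubleLine_iff [Fintype F] (h2 : (2:F) = 0) (a : Fin 6 → F) :
    IsDoubleLine a ↔ a ≠ 0 ∧ a 1 = 0 ∧ a 2 = 0 ∧ a 4 = 0 := by
  constructor
  · rintro ⟨c, l, hc, hl, rfl⟩
    refine ⟨smul_ne_zero hc (mulLin_ne_zero hl hl), ?_, ?_, ?_⟩ <;>
      simp only [Pi.smul_apply, smul_eq_mul, mulLin_c1, mulLin_c2, mulLin_c4]
    · linear_combination c * l 0 * l 1 * h2
    · linear_combination c * l 0 * l 2 * h2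
    · linear_combination c * l 1 * l 2 * h2
  · rintro ⟨hne, e1, e2, e4⟩
    obtain ⟨r0, hr0⟩ := sq_surj h2 (a 0)
    obtain ⟨r1, hr1⟩ := sq_surj h2 (a 3)
    obtain ⟨r2, hr2⟩ := sq_surj h2 (a 5)
    refine ⟨1, ![r0, r1, r2], one_ne_zero, ?_, ?_⟩
    · intro hcon
      apply hne
      have f0 := congrFun hcon 0
      have f1 := congrFun hcon 1
      have f2 := congrFun hcon 2
      simp only [Matrix.cons_val_zero, Matrix.cons_val_one, Matrix.head_cons,
        Matrix.cons_val_two, Matrix.tail_cons, Pi.zero_apply] at f0 f1 f2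
      funext i
      fin_cases i
      · show a 0 = 0; rw [← hr0, f0, mul_zero]
      · exact e1
      · exact e2
      · show a 3 = 0; rw [← hr1, f1, mul_zero]
      · exact e4
      · show a 5 = 0; rw [← hr2, f2, mul_zero]
    · funext i
      fin_cases i
      · show a 0 = 1 * (r0 * r0); rw [hr0, one_mul]
      · show a 1 = 1 * (r0 * r1 + r1 * r0); rw [e1]; linear_combination -r0 * r1 * h2
      · show a 2 = 1 * (r0 * r2 + r2 * r0); rw [e2]; linear_combination -r0 * r2 * h2
      · show a 3 = 1 * (r1 * r1); rw [hr1, one_mul]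
      · show a 4 = 1 * (r1 * r2 + r2 * r1); rw [e4]; linear_combination -r1 * r2 * h2
      · show a 5 = 1 * (r2 * r2); rw [hr2, one_mul]

lemma disc_zero : disc (0 : Fin 6 → F) = 0 := by simp [disc]

lemma mulLin_zero_right (b : Fin 3 → F) : mulLin b 0 = 0 := by
  funext i; fin_cases i <;> simp

lemma mulLin_zero_left (b : Fin 3 → F) : mulLin 0 b = 0 := by
  funext i; fin_cases i <;> simp

/-- Classification of nonzero singular conics. -/
lemma classify {a : Fin 6 → F} (ha : a ≠ 0) (hd : disc a = 0) :
    IsDoubleLine a ∨ IsRealPair a ∨ IsImagPair a := by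
  by_cases hfac : ∃ l1 l2 : Fin 3 → F, a = mulLin l1 l2
  · obtain ⟨l1, l2, rfl⟩ := hfac
    by_cases hp1 : ∃ t : F, l2 = t • l1
    · obtain ⟨t, rfl⟩ := hp1
      left
      have hl1 : l1 ≠ 0 := by
        rintro rfl
        exact ha (mulLin_zero_left _)
      have ht : t ≠ 0 := by
        rintro rfl
        rw [zero_smul, mulLin_zero_right] at ha
        exact ha rfl
      exact ⟨t, l1, ht, hl1, (mulLin_smul_right t l1 l1).symm ▸ rfl⟩
    · by_cases hp2 : ∃ t : F, l1 = t • l2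
      · obtain ⟨t, rfl⟩ := hp2
        left
        have hl2 : l2 ≠ 0 := by
          rintro rfl
          exact ha (mulLin_zero_right _)
        have ht : t ≠ 0 := by
          rintro rfl
          rw [zero_smul, mulLin_zero_left] at ha
          exact ha rfl
        exact ⟨t, l2, ht, hl2, (mulLin_smul_left t l2 l2).symm ▸ rfl⟩
      · exact Or.inr (Or.inl ⟨l1, l2, hp1, hp2, rfl⟩)
  · exact Or.inr (Or.inr ⟨hd, hfac⟩)

lemma double_factors {a : Fin 6 → F} (h : IsDoubleLine a) :
    ∃ l1 l2 : Fin 3 → F, a = mulLin l1 l2 := by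
  obtain ⟨c, l, hc, hl, rfl⟩ := h
  exact ⟨c • l, l, (mulLin_smul_left c l l).symm⟩

lemma not_double_and_real {a : Fin 6 → F} (hD : IsDoubleLine a) (hR : IsRealPair a) :
    False := by
  obtain ⟨c, l, hc, hl, rfl⟩ := hD
  obtain ⟨l1, l2, hn1, hn2, heq⟩ := hR
  have hl1 : l1 ≠ 0 := (NP_nonzero ⟨hn1, hn2⟩).1
  have hl2 : l2 ≠ 0 := (NP_nonzero ⟨hn1, hn2⟩).2
  have hEv : ∀ X, ev (c • l) X * ev l X = ev l1 X * ev l2 X := by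
    intro X
    rw [← evQ_mulLin, ← evQ_mulLin, mulLin_smul_left, heq]
  have hind : ∀ t : F, l2 ≠ t • l1 := fun t hcon => hn1 ⟨t, hcon⟩
  rcases factor_unique hl1 hl2 hind hEv with ⟨t, ht, hbt, hct⟩ | ⟨t, ht, hbt, hct⟩
  · -- c • l = t • l1,  l = t⁻¹ • l2
    apply hn1
    refine ⟨t * (t⁻¹ * c)⁻¹, ?_⟩
    have hl1e : l1 = (t⁻¹ * c) • l := by
      have h' := congrArg (fun v : Fin 3 → F => t⁻¹ • v) hbt.symm
      simpa [smul_smul, inv_mul_cancel₀ ht] using h'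
    have hl2e : l2 = t • l := by
      have h' := congrArg (fun v : Fin 3 → F => t • v) hct
      simpa [smul_smul, mul_inv_cancel₀ ht] using h'.symm
    rw [hl1e, hl2e, smul_smul]
    have hsc : t * (t⁻¹ * c)⁻¹ * (t⁻¹ * c) = t := by
      field_simp
    rw [hsc]
  · -- c • l = t • l2,  l = t⁻¹ • l1
    apply hn2
    refine ⟨t * (t⁻¹ * c)⁻¹, ?_⟩
    have hl2e : l2 = (t⁻¹ * c) • l := by
      have h' := congrArg (fun v : Fin 3 → F => t⁻¹ • v) hbt.symm
      simpa [smul_smul, inv_mul_cancel₀ ht] using h'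
    have hl1e : l1 = t • l := by
      have h' := congrArg (fun v : Fin 3 → F => t • v) hct
      simpa [smul_smul, mul_inv_cancel₀ ht] using h'.symm
    rw [hl2e, hl1e, smul_smul]
    have hsc : t * (t⁻¹ * c)⁻¹ * (t⁻¹ * c) = t := by
      field_simp
    rw [hsc]

lemma mem_squab {y a : Fin 6 → F} : a ∈ squab y ↔ Bform a y = 0 := Iff.rfl

end Aux

/-- conic counts of the squab of a nucleus-plane point, `q` even. -/
theorem squab_nucleus_conic_counts (F : Type) [Field F] [Fintype F] (q : ℕ)
    (hq : Fintype.card F = q) (heven : Even q) (y : Fin 6 → F) (hy : y ≠ 0)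
    (h0 : y 0 = 0) (h3 : y 3 = 0) (h5 : y 5 = 0) :
    numConics (squab y) IsDoubleLine = q ^ 2 + q + 1 ∧
    numConics (squab y) IsRealPair = (q ^ 3 + 2 * q ^ 2 + q) / 2 ∧
    numConics (squab y) IsImagPair = (q ^ 3 - q) / 2 ∧
    numConics (squab y) IsNonsingular = q ^ 4 - q ^ 2 := by
  classical
  have h2 : (2:F) = 0 := two_eq_zero (by rw [hq]; exact heven)
  have hq2 : 2 ≤ q := by rw [← hq]; exact Fintype.one_lt_card
  obtain ⟨k, hk⟩ := heven
  -- generic span-counting reduction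
  have key : ∀ (T : (Fin 6 → F) → Prop),
      (∀ a : Fin 6 → F, T a → ∀ t : F, t ≠ 0 → T (t • a)) →
      (q - 1) * numConics (squab y) T
        = Set.ncard {a : Fin 6 → F | a ≠ 0 ∧ a ∈ squab y ∧ T a} := by
    intro T hT
    have hsets : {P : Submodule F (Fin 6 → F) |
        ∃ a : Fin 6 → F, a ≠ 0 ∧ a ∈ squab y ∧ T a ∧ P = Submodule.span F {a}}
        = {P : Submodule F (Fin 6 → F) |
            ∃ a, a ∈ {x : Fin 6 → F | x ≠ 0 ∧ x ∈ squab y ∧ T x}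
              ∧ P = Submodule.span F {a}} := by
      ext P
      constructor
      · rintro ⟨a, u1, u2, u3, u4⟩; exact ⟨a, ⟨u1, u2, u3⟩, u4⟩
      · rintro ⟨a, ⟨u1, u2, u3⟩, u4⟩; exact ⟨a, u1, u2, u3, u4⟩
    unfold numConics
    rw [hsets, ← hq]
    refine ncard_spans _ (fun h => h.1 rfl) ?_
    rintro a ⟨u1, u2, u3⟩ t ht
    exact ⟨smul_ne_zero ht u1, Submodule.smul_mem _ t u2, hT a u3 t ht⟩
  -- the squab membership rewritten
  have hseteq : ∀ T : (Fin 6 → F) → Prop,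
      {a : Fin 6 → F | a ≠ 0 ∧ a ∈ squab y ∧ T a}
        = {a : Fin 6 → F | a ≠ 0 ∧ Bform a y = 0 ∧ T a} := by
    intro T
    ext a
    simp only [Set.mem_setOf_eq, mem_squab]
  -- scale invariance of the four types
  have hTd : ∀ a : Fin 6 → F, IsDoubleLine a → ∀ t : F, t ≠ 0 → IsDoubleLine (t • a) := by
    rintro a ⟨c, l, hc, hl, rfl⟩ t ht
    exact ⟨t * c, l, mul_ne_zero ht hc, hl, by rw [smul_smul]⟩
  have hTr : ∀ a : Fin 6 → F, IsRealPair a → ∀ t : F, t ≠ 0 → IsRealPair (t • a) := by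
    rintro a ⟨l1, l2, hn1, hn2, rfl⟩ t ht
    refine ⟨t • l1, l2, ?_, ?_, (mulLin_smul_left t l1 l2).symm⟩
    · rintro ⟨s, hs⟩
      exact hn1 ⟨s * t, by rw [hs, smul_smul]⟩
    · rintro ⟨s, hs⟩
      apply hn2
      refine ⟨t⁻¹ * s, ?_⟩
      have h' := congrArg (fun v : Fin 3 → F => t⁻¹ • v) hs
      simpa [smul_smul, inv_mul_cancel₀ ht] using h'
  have hTi : ∀ a : Fin 6 → F, IsImagPair a → ∀ t : F, t ≠ 0 → IsImagPair (t • a) := by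
    rintro a ⟨hd, hfac⟩ t ht
    refine ⟨by rw [disc_smul, hd, mul_zero], ?_⟩
    rintro ⟨l1, l2, heq⟩
    apply hfac
    refine ⟨t⁻¹ • l1, l2, ?_⟩
    rw [mulLin_smul_left, ← heq, smul_smul, inv_mul_cancel₀ ht, one_smul]
  have hTn : ∀ a : Fin 6 → F, IsNonsingular a → ∀ t : F, t ≠ 0 → IsNonsingular (t • a) := by
    intro a hd t ht
    simp only [IsNonsingular, disc_smul]
    exact mul_ne_zero (pow_ne_zero 3 ht) hd
  -- vector-set counts
  have hDset : {a : Fin 6 → F | a ≠ 0 ∧ Bform a y = 0 ∧ IsDoubleLine a}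
      = {a : Fin 6 → F | a 1 = (0:Fin 3 → F) 0 ∧ a 2 = (0:Fin 3 → F) 1 ∧
          a 4 = (0:Fin 3 → F) 2 ∧ (fun _ => True) ![a 0, a 3, a 5]} \ {0} := by
    ext a
    simp only [Set.mem_setOf_eq, Set.mem_diff, Set.mem_singleton_iff, Pi.zero_apply]
    constructor
    · rintro ⟨hne, hB, hDL⟩
      obtain ⟨-, e1, e2, e4⟩ := (isDoubleLine_iff h2 a).mp hDL
      exact ⟨⟨e1, e2, e4, trivial⟩, hne⟩
    · rintro ⟨⟨e1, e2, e4, -⟩, hne⟩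
      refine ⟨hne, ?_, (isDoubleLine_iff h2 a).mpr ⟨hne, e1, e2, e4⟩⟩
      simp only [Bform]; rw [h0, h3, h5, e1, e2, e4]; ring
  have hDcard : Set.ncard {a : Fin 6 → F | a ≠ 0 ∧ Bform a y = 0 ∧ IsDoubleLine a} + 1
      = q^3 := by
    rw [hDset]
    have h0mem : (0 : Fin 6 → F) ∈ {a : Fin 6 → F | a 1 = (0:Fin 3 → F) 0 ∧
        a 2 = (0:Fin 3 → F) 1 ∧ a 4 = (0:Fin 3 → F) 2 ∧ (fun _ => True) ![a 0, a 3, a 5]} := by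
      simp
    rw [Set.ncard_diff_singleton_of_mem h0mem]
    have hfull : Set.ncard {a : Fin 6 → F | a 1 = (0:Fin 3 → F) 0 ∧
        a 2 = (0:Fin 3 → F) 1 ∧ a 4 = (0:Fin 3 → F) 2 ∧ (fun _ => True) ![a 0, a 3, a 5]}
        = q^3 := by
      rw [card_pinned (0 : Fin 3 → F) (fun _ => True)]
      simp only [Set.setOf_true, Set.ncard_univ, Nat.card_eq_fintype_card]
      rw [Fintype.card_fun]
      simp [hq]
    rw [hfull]
    have hq0 : 0 < q := lt_of_lt_of_le (by norm_num) hq2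
    exact Nat.sub_add_cancel (Nat.one_le_pow 3 q hq0)
  have hSing := card_sing h2 y hy h0 h3 h5
  rw [hq] at hSing
  have hSq : Set.ncard {a : Fin 6 → F | Bform a y = 0} = q^5 := by
    have hBt : ∀ a : Fin 6 → F, Bform a y = ∑ i, y i * a i := by
      intro a
      simp [Bform, Fin.sum_univ_six]
      ring
    have hseq : {a : Fin 6 → F | Bform a y = 0} = {a : Fin 6 → F | ∑ i, y i * a i = 0} := by
      ext a; rw [Set.mem_setOf_eq, Set.mem_setOf_eq, hBt]
    rw [hseq]
    have hle := card_linEq y hy 0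
    rw [hq] at hle
    simpa using hle
  -- partition of the singular conics
  have hpart : {a : Fin 6 → F | Bform a y = 0 ∧ disc a = 0}
      = insert (0 : Fin 6 → F)
        (({a : Fin 6 → F | a ≠ 0 ∧ Bform a y = 0 ∧ IsDoubleLine a}
          ∪ {a : Fin 6 → F | a ≠ 0 ∧ Bform a y = 0 ∧ IsRealPair a})
          ∪ {a : Fin 6 → F | a ≠ 0 ∧ Bform a y = 0 ∧ IsImagPair a}) := by
    ext a
    simp only [Set.mem_setOf_eq, Set.mem_insert_iff, Set.mem_union]
    constructor
    · rintro ⟨hB, hd⟩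
      by_cases hz : a = 0
      · exact Or.inl hz
      · refine Or.inr ?_
        rcases classify hz hd with h | h | h
        · exact Or.inl (Or.inl ⟨hz, hB, h⟩)
        · exact Or.inl (Or.inr ⟨hz, hB, h⟩)
        · exact Or.inr ⟨hz, hB, h⟩
    · rintro (rfl | ((⟨hz, hB, h⟩ | ⟨hz, hB, h⟩) | ⟨hz, hB, h⟩))
      · exact ⟨by simp [Bform], disc_zero⟩
      · refine ⟨hB, ?_⟩
        obtain ⟨c, l, hc, hl, rfl⟩ := h
        rw [disc_smul, disc_mulLin, mul_zero]
      · obtain ⟨l1, l2, -, -, rfl⟩ := h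
        exact ⟨hB, disc_mulLin _ _⟩
      · exact ⟨hB, h.1⟩
  have hdisj_dr : Disjoint {a : Fin 6 → F | a ≠ 0 ∧ Bform a y = 0 ∧ IsDoubleLine a}
      {a : Fin 6 → F | a ≠ 0 ∧ Bform a y = 0 ∧ IsRealPair a} := by
    rw [Set.disjoint_left]
    rintro a ⟨-, -, hD⟩ ⟨-, -, hR⟩
    exact not_double_and_real hD hR
  have hdisj_i : Disjoint ({a : Fin 6 → F | a ≠ 0 ∧ Bform a y = 0 ∧ IsDoubleLine a}
      ∪ {a : Fin 6 → F | a ≠ 0 ∧ Bform a y = 0 ∧ IsRealPair a})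
      {a : Fin 6 → F | a ≠ 0 ∧ Bform a y = 0 ∧ IsImagPair a} := by
    rw [Set.disjoint_left]
    rintro a (⟨-, -, hD⟩ | ⟨-, -, hR⟩) ⟨-, -, hI⟩
    · exact hI.2 (double_factors hD)
    · obtain ⟨l1, l2, -, -, heq⟩ := hR
      exact hI.2 ⟨l1, l2, heq⟩
  have h0notin : (0 : Fin 6 → F) ∉
      (({a : Fin 6 → F | a ≠ 0 ∧ Bform a y = 0 ∧ IsDoubleLine a}
        ∪ {a : Fin 6 → F | a ≠ 0 ∧ Bform a y = 0 ∧ IsRealPair a})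
        ∪ {a : Fin 6 → F | a ≠ 0 ∧ Bform a y = 0 ∧ IsImagPair a}) := by
    rintro ((⟨h, -⟩ | ⟨h, -⟩) | ⟨h, -⟩) <;> exact h rfl
  have hScount : Set.ncard {a : Fin 6 → F | Bform a y = 0 ∧ disc a = 0}
      = 1 + (Set.ncard {a : Fin 6 → F | a ≠ 0 ∧ Bform a y = 0 ∧ IsDoubleLine a}
        + Set.ncard {a : Fin 6 → F | a ≠ 0 ∧ Bform a y = 0 ∧ IsRealPair a}
        + Set.ncard {a : Fin 6 → F | a ≠ 0 ∧ Bform a y = 0 ∧ IsImagPair a}) := by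
    rw [hpart, Set.ncard_insert_of_notMem h0notin (Set.toFinite _),
      Set.ncard_union_eq hdisj_i (Set.toFinite _) (Set.toFinite _),
      Set.ncard_union_eq hdisj_dr (Set.toFinite _) (Set.toFinite _)]
    ring
  -- real pair count
  have hRcount : 2 * (q - 1)
      * Set.ncard {a : Fin 6 → F | a ≠ 0 ∧ Bform a y = 0 ∧ IsRealPair a}
      = (q - 1) * (q^3 - q) + (q^3 - q) * (q^2 - q) := by
    have hh := (card_pairs_fiber y).symm.trans (card_pairs h2 y hy h0 h3 h5)
    rwa [hq] at hh
  -- nonsingular count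
  have hNset : {a : Fin 6 → F | a ≠ 0 ∧ Bform a y = 0 ∧ IsNonsingular a}
      = {a : Fin 6 → F | Bform a y = 0} \ {a : Fin 6 → F | Bform a y = 0 ∧ disc a = 0} := by
    ext a
    simp only [Set.mem_setOf_eq, Set.mem_diff]
    constructor
    · rintro ⟨hz, hB, hn⟩
      exact ⟨hB, fun hc => hn hc.2⟩
    · rintro ⟨hB, hns⟩
      have hd : disc a ≠ 0 := fun h => hns ⟨hB, h⟩
      refine ⟨?_, hB, hd⟩
      rintro rfl
      exact hd disc_zero
  have hsub : {a : Fin 6 → F | Bform a y = 0 ∧ disc a = 0}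
      ⊆ {a : Fin 6 → F | Bform a y = 0} := fun a ha => ha.1
  have hNcount : Set.ncard {a : Fin 6 → F | a ≠ 0 ∧ Bform a y = 0 ∧ IsNonsingular a}
      + Set.ncard {a : Fin 6 → F | Bform a y = 0 ∧ disc a = 0} = q^5 := by
    rw [hNset, ← hSq, Set.ncard_diff hsub (Set.toFinite _)]
    have hle := Set.ncard_le_ncard hsub (Set.toFinite _)
    omega
  -- the four counting equations
  have eD := (key IsDoubleLine hTd).trans (by rw [hseteq])
  have eR := (key IsRealPair hTr).trans (by rw [hseteq])
  have eI := (key IsImagPair hTi).trans (by rw [hseteq])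
  have eN := (key IsNonsingular hTn).trans (by rw [hseteq])
  -- integer arithmetic
  have h1q : 1 ≤ q := by omega
  have hq3 : q ≤ q ^ 3 := Nat.le_self_pow (by norm_num) q
  have hq2' : q ≤ q ^ 2 := Nat.le_self_pow (by norm_num) q
  have hq42 : q ^ 2 ≤ q ^ 4 := Nat.pow_le_pow_right (by omega) (by norm_num)
  have hqZ : (2:ℤ) ≤ (q:ℤ) := by exact_mod_cast hq2
  have hne1 : ((q:ℤ) - 1) ≠ 0 := by omega
  zify [h1q, hq3, hq2', hq42] at eD eR eI eN hDcard hSing hScount hRcount hNcount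
  -- divisibility facts
  have h2R : 2 * ((q^3 + 2*q^2 + q) / 2) = q^3 + 2*q^2 + q := by
    refine Nat.mul_div_cancel' ⟨4*k^3 + 4*k^2 + k, ?_⟩
    rw [hk]; ring
  have h2I : 2 * ((q^3 - q) / 2) = q^3 - q := by
    refine Nat.mul_div_cancel' ⟨4*k^3 - k, ?_⟩
    have h8 : q^3 = 8*k^3 := by rw [hk]; ring
    have hqk : q = 2*k := by omega
    generalize hm : k^3 = m at h8
    omega
  have h2RZ : (2:ℤ) * ((q^3 + 2*q^2 + q) / 2 : ℕ) = (q:ℤ)^3 + 2*(q:ℤ)^2 + q := by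
    exact_mod_cast congrArg (Nat.cast : ℕ → ℤ) h2R
  have h2IZ : (2:ℤ) * (((q^3 - q) / 2 : ℕ) : ℤ) = (q:ℤ)^3 - (q:ℤ) := by
    have hs : ((q^3 - q : ℕ) : ℤ) = (q:ℤ)^3 - (q:ℤ) := by
      push_cast [Nat.cast_sub hq3]; ring
    rw [← hs]
    exact_mod_cast congrArg (Nat.cast : ℕ → ℤ) h2I
  refine ⟨?_, ?_, ?_, ?_⟩
  · -- double lines
    have hZ : ((q:ℤ) - 1) * (numConics (squab y) IsDoubleLine : ℤ)
        = ((q:ℤ) - 1) * ((q:ℤ)^2 + q + 1) := by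
      rw [eD]
      linear_combination hDcard
    have := mul_left_cancel₀ hne1 hZ
    exact_mod_cast this
  · -- real pairs
    have hZ : (2 * ((q:ℤ) - 1) * ((q:ℤ) - 1)) * (numConics (squab y) IsRealPair : ℤ)
        = (2 * ((q:ℤ) - 1) * ((q:ℤ) - 1)) * (((q^3 + 2*q^2 + q) / 2 : ℕ) : ℤ) := by
      linear_combination 2 * ((q:ℤ) - 1) * eR + hRcount - ((q:ℤ)-1)^2 * h2RZ
    have hne2 : (2 * ((q:ℤ) - 1) * ((q:ℤ) - 1)) ≠ 0 := by
      apply mul_ne_zero (mul_ne_zero (by norm_num) hne1) hne1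
    have := mul_left_cancel₀ hne2 hZ
    exact_mod_cast this
  · -- imaginary pairs
    have hZ : (2 * ((q:ℤ) - 1) * ((q:ℤ) - 1)) * (numConics (squab y) IsImagPair : ℤ)
        = (2 * ((q:ℤ) - 1) * ((q:ℤ) - 1)) * (((q^3 - q) / 2 : ℕ) : ℤ) := by
      linear_combination 2 * ((q:ℤ) - 1) * eI - 2 * ((q:ℤ) - 1) * hScount
        + 2 * ((q:ℤ) - 1) * hSing - 2 * ((q:ℤ) - 1) * hDcard - hRcount
        - ((q:ℤ)-1)^2 * h2IZ
    have hne2 : (2 * ((q:ℤ) - 1) * ((q:ℤ) - 1)) ≠ 0 := by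
      apply mul_ne_zero (mul_ne_zero (by norm_num) hne1) hne1
    have := mul_left_cancel₀ hne2 hZ
    exact_mod_cast this
  · -- nonsingular
    have hZ : ((q:ℤ) - 1) * (numConics (squab y) IsNonsingular : ℤ)
        = ((q:ℤ) - 1) * ((q:ℤ)^4 - (q:ℤ)^2) := by
      linear_combination eN + hNcount - hSing
    have := mul_left_cancel₀ hne1 hZ
    have hfin : (numConics (squab y) IsNonsingular : ℤ) = ((q^4 - q^2 : ℕ) : ℤ) := by
      rw [this]
      push_cast [Nat.cast_sub hq42]
      ring
    exact_mod_cast hfin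
end Conics
end

section
/- Let q be any prime power and F = GF(q). Let y ∈ F^6 be nonzero with rank(M_y) ≠ 2. Then the squab S_y contains exactly q+1 double-line conics. -/
open Matrix

namespace Conics

section Proofs

variable {F : Type} [Field F] [Fintype F]

lemma natCard_subtype_eq_filter {α : Type*} [Fintype α] (P : α → Prop) [DecidablePred P] :
    Nat.card {x // P x} = (Finset.univ.filter P).card := by
  rw [Nat.card_eq_fintype_card, Fintype.card_subtype]

lemma card_linsol (u : Fin 3 → F) (hu : u ≠ 0) :
    Nat.card {x : Fin 3 → F // u 0 * x 0 + u 1 * x 1 + u 2 * x 2 = 0} = Fintype.card F ^ 2 := by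
  classical
  let φ : (Fin 3 → F) →ₗ[F] F :=
    { toFun := fun x => u 0 * x 0 + u 1 * x 1 + u 2 * x 2
      map_add' := fun a b => by simp only [Pi.add_apply]; ring
      map_smul' := fun c a => by simp only [Pi.smul_apply, smul_eq_mul, RingHom.id_apply]; ring }
  obtain ⟨i, hi⟩ : ∃ i, u i ≠ 0 := by
    by_contra h; push_neg at h; exact hu (funext h)
  have hx : ∃ x, φ x ≠ 0 := by
    refine ⟨Pi.single i 1, ?_⟩
    have : φ (Pi.single i 1) = u i := by
      show u 0 * _ + u 1 * _ + u 2 * _ = u i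
      fin_cases i <;> simp
    rw [this]; exact hi
  have hsurj : LinearMap.range φ = ⊤ := by
    obtain ⟨x, hx⟩ := hx
    rw [LinearMap.range_eq_top]
    intro z
    refine ⟨(z / φ x) • x, ?_⟩
    rw [_root_.map_smul, smul_eq_mul, div_mul_cancel₀ _ hx]
  have hrk : Module.finrank F (LinearMap.ker φ) = 2 := by
    have h1 := LinearMap.finrank_range_add_finrank_ker φ
    rw [hsurj, finrank_top, Module.finrank_fin_fun, Module.finrank_self] at h1
    omega
  have hcard : Nat.card (LinearMap.ker φ) = Fintype.card F ^ 2 := by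
    rw [Nat.card_eq_fintype_card, Module.card_eq_pow_finrank (K := F), hrk]
  rw [← hcard]
  apply Nat.card_congr
  exact Equiv.subtypeEquivRight (fun x => by
    simp only [LinearMap.mem_ker]; exact Iff.rfl)

lemma card_ne_zero_subtype : Nat.card {u : F // u ≠ 0} = Fintype.card F - 1 := by
  classical
  rw [Nat.card_congr unitsEquivNeZero.symm, Nat.card_eq_fintype_card, Fintype.card_units]

lemma card_mul_eq (A t : F) (hA : A ≠ 0) (ht : t ≠ 0) :
    Nat.card {p : F × F // A * p.1 * p.2 = t} = Fintype.card F - 1 := by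
  classical
  have e : {p : F × F // A * p.1 * p.2 = t} ≃ {u : F // u ≠ 0} :=
    { toFun := fun p => ⟨p.1.1, by
        intro h0
        apply ht
        rw [← p.2, h0, mul_zero, zero_mul]⟩
      invFun := fun u => ⟨(u.1, t / (A * u.1)), by
        have hu := u.2
        field_simp⟩
      left_inv := fun p => by
        ext
        · rfl
        · have hp := p.2
          have h1 : p.1.1 ≠ 0 := by
            intro h0; apply ht; rw [← hp, h0, mul_zero, zero_mul]
          show t / (A * p.1.1) = p.1.2
          rw [div_eq_iff (mul_ne_zero hA h1)]
          linear_combination -hp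
      right_inv := fun u => rfl }
  rw [Nat.card_congr e, card_ne_zero_subtype]

lemma card_mul_eq_zero (A : F) (hA : A ≠ 0) :
    Nat.card {p : F × F // A * p.1 * p.2 = 0} = 2 * Fintype.card F - 1 := by
  classical
  have hcompl : Fintype.card {p : F × F // ¬(A * p.1 * p.2 = 0)} =
      (Fintype.card F - 1) * (Fintype.card F - 1) := by
    have e : {p : F × F // ¬(A * p.1 * p.2 = 0)} ≃ {u : F // u ≠ 0} × {v : F // v ≠ 0} :=
      { toFun := fun p => (⟨p.1.1, fun h => p.2 (by rw [h, mul_zero, zero_mul])⟩,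
          ⟨p.1.2, fun h => p.2 (by rw [h, mul_zero])⟩)
        invFun := fun uv => ⟨(uv.1.1, uv.2.1), by
          simp only [mul_eq_zero, not_or]
          exact ⟨⟨hA, uv.1.2⟩, uv.2.2⟩⟩
        left_inv := fun p => rfl
        right_inv := fun uv => rfl }
    rw [Fintype.card_congr e, Fintype.card_prod, ← Nat.card_eq_fintype_card,
      card_ne_zero_subtype]
  have htot := Fintype.card_subtype_compl (fun p : F × F => A * p.1 * p.2 = 0)
  rw [hcompl] at htot
  have hle := Fintype.card_subtype_le (fun p : F × F => A * p.1 * p.2 = 0)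
  rw [Nat.card_eq_fintype_card]
  rw [Fintype.card_prod] at htot hle
  have hq1 : 1 ≤ Fintype.card F := Fintype.card_pos
  generalize hc : Fintype.card F = q at htot hle hq1 ⊢
  obtain ⟨m, rfl⟩ : ∃ m, q = m + 1 := ⟨q - 1, by omega⟩
  have hexp : (m + 1) * (m + 1) = m * m + 2 * m + 1 := by ring
  have hm : (m + 1) - 1 = m := by omega
  rw [hm] at htot
  omega

lemma count_binary_iso (A B s : F) (hA : A ≠ 0) (hB : B ≠ 0) (h2 : (2 : F) ≠ 0)
    (hs : A * s ^ 2 = -B) (t : F) :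
    Nat.card {p : F × F // A * p.1 ^ 2 + B * p.2 ^ 2 = t} =
      Nat.card {p : F × F // A * p.1 * p.2 = t} := by
  classical
  have hsne : s ≠ 0 := by
    intro h0; rw [h0] at hs; apply hB
    have : A * 0 ^ 2 = -B := hs
    simpa using this.symm
  let e : F × F ≃ F × F :=
    { toFun := fun p => (p.1 - s * p.2, p.1 + s * p.2)
      invFun := fun p => ((p.1 + p.2) / 2, (p.2 - p.1) / (2 * s))
      left_inv := fun p => by
        ext
        · show (p.1 - s * p.2 + (p.1 + s * p.2)) / 2 = p.1
          field_simp; ring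
        · show (p.1 + s * p.2 - (p.1 - s * p.2)) / (2 * s) = p.2
          field_simp; ring
      right_inv := fun p => by
        ext
        · show (p.1 + p.2) / 2 - s * ((p.2 - p.1) / (2 * s)) = p.1
          field_simp; ring
        · show (p.1 + p.2) / 2 + s * ((p.2 - p.1) / (2 * s)) = p.2
          field_simp; ring }
  apply Nat.card_congr
  refine e.subtypeEquiv (fun p => ?_)
  have he : e p = (p.1 - s * p.2, p.1 + s * p.2) := rfl
  rw [he]
  constructor
  · intro h; rw [← h]; linear_combination (-(p.2 ^ 2)) * hs
  · intro h; rw [← h]; linear_combination p.2 ^ 2 * hs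

lemma exists_binary_rep (A B : F) (hA : A ≠ 0) (hB : B ≠ 0) (hch : ringChar F ≠ 2) (r : F) :
    ∃ a b : F, A * a ^ 2 + B * b ^ 2 = r := by
  classical
  have hf2 : (Polynomial.C A * Polynomial.X ^ 2 : Polynomial F).degree = 2 :=
    Polynomial.degree_C_mul_X_pow 2 hA
  have hg2 : (Polynomial.C B * Polynomial.X ^ 2 - Polynomial.C r : Polynomial F).degree = 2 := by
    rw [Polynomial.degree_sub_eq_left_of_degree_lt]
    · exact Polynomial.degree_C_mul_X_pow 2 hB
    · rw [Polynomial.degree_C_mul_X_pow 2 hB]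
      exact lt_of_le_of_lt Polynomial.degree_C_le (by norm_num)
  obtain ⟨a, b, hab⟩ := FiniteField.exists_root_sum_quadratic hf2 hg2
    (FiniteField.odd_card_of_char_ne_two hch)
  refine ⟨a, b, ?_⟩
  simp only [Polynomial.eval_add, Polynomial.eval_mul, Polynomial.eval_pow, Polynomial.eval_sub,
    Polynomial.eval_C, Polynomial.eval_X] at hab
  linear_combination hab

lemma aniso_eq_zero {A B : F} (hA : A ≠ 0) (hani : ∀ s : F, A * s ^ 2 ≠ -B) :
    ∀ x y : F, A * x ^ 2 + B * y ^ 2 = 0 → x = 0 ∧ y = 0 := by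
  intro x y h
  by_cases hy : y = 0
  · subst hy
    refine ⟨?_, rfl⟩
    have hx2 : A * x ^ 2 = 0 := by linear_combination h
    have := (mul_eq_zero.mp hx2).resolve_left hA
    exact pow_eq_zero_iff (two_ne_zero) |>.mp this
  · exfalso
    apply hani (x / y)
    field_simp
    linear_combination h

lemma count_binary_aniso_zero (A B : F) (hA : A ≠ 0) (hani : ∀ s : F, A * s ^ 2 ≠ -B) :
    Nat.card {p : F × F // A * p.1 ^ 2 + B * p.2 ^ 2 = 0} = 1 := by
  classical
  have e : {p : F × F // A * p.1 ^ 2 + B * p.2 ^ 2 = 0} ≃ {p : F × F // p = (0, 0)} :=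
    Equiv.subtypeEquivRight (fun p => by
      constructor
      · intro h
        obtain ⟨h1, h2⟩ := aniso_eq_zero hA hani p.1 p.2 h
        exact Prod.ext h1 h2
      · intro h; rw [h]; norm_num)
  rw [Nat.card_congr e, Nat.card_eq_fintype_card, Fintype.card_subtype_eq]

lemma count_binary_aniso_le (A B : F) (hA : A ≠ 0) (hB : B ≠ 0)
    (hani : ∀ s : F, A * s ^ 2 ≠ -B) (hch : ringChar F ≠ 2) (t t' : F) (ht : t ≠ 0) (ht' : t' ≠ 0) :
    Nat.card {p : F × F // A * p.1 ^ 2 + B * p.2 ^ 2 = t} ≤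
      Nat.card {p : F × F // A * p.1 ^ 2 + B * p.2 ^ 2 = t'} := by
  classical
  obtain ⟨a, b, hab⟩ := exists_binary_rep A B hA hB hch (A * t' / t)
  set d := -B / A with hd
  have hBd : B = -(A * d) := by rw [hd]; field_simp
  have habne : A * a ^ 2 + B * b ^ 2 ≠ 0 := by
    rw [hab]
    exact div_ne_zero (mul_ne_zero hA ht') ht
  have key : ∀ x y : F, A * (A * (x * a + d * y * b) ^ 2 + B * (x * b + y * a) ^ 2)
      = (A * x ^ 2 + B * y ^ 2) * (A * a ^ 2 + B * b ^ 2) := by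
    intro x y; rw [hBd]; ring
  refine Nat.card_le_card_of_injective
    (fun p => ⟨(p.1.1 * a + d * p.1.2 * b, p.1.1 * b + p.1.2 * a), ?_⟩) ?_
  · have h1 := key p.1.1 p.1.2
    rw [p.2, hab] at h1
    have h2 : t * (A * t' / t) = A * t' := by field_simp
    rw [h2] at h1
    exact mul_left_cancel₀ hA h1
  · intro p q hpq
    have hx := (Prod.ext_iff.mp (Subtype.ext_iff.mp hpq)).1
    have hy := (Prod.ext_iff.mp (Subtype.ext_iff.mp hpq)).2
    simp only at hx hy
    have hz1 : (p.1.1 - q.1.1) * a + d * (p.1.2 - q.1.2) * b = 0 := by linear_combination hx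
    have hz2 : (p.1.1 - q.1.1) * b + (p.1.2 - q.1.2) * a = 0 := by linear_combination hy
    have hk := key (p.1.1 - q.1.1) (p.1.2 - q.1.2)
    rw [hz1, hz2] at hk
    have hk0 : (A * (p.1.1 - q.1.1) ^ 2 + B * (p.1.2 - q.1.2) ^ 2) *
        (A * a ^ 2 + B * b ^ 2) = 0 := by
      rw [← hk]; ring
    have hΔ := (mul_eq_zero.mp hk0).resolve_right habne
    obtain ⟨h1, h2⟩ := aniso_eq_zero hA hani _ _ hΔ
    apply Subtype.ext
    apply Prod.ext
    · exact sub_eq_zero.mp h1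
    · exact sub_eq_zero.mp h2

lemma count_binary_aniso (A B : F) (hA : A ≠ 0) (hB : B ≠ 0)
    (hani : ∀ s : F, A * s ^ 2 ≠ -B) (hch : ringChar F ≠ 2) (t : F) (ht : t ≠ 0) :
    Nat.card {p : F × F // A * p.1 ^ 2 + B * p.2 ^ 2 = t} = Fintype.card F + 1 := by
  classical
  have hNt : ∀ r : F, Nat.card {p : F × F // A * p.1 ^ 2 + B * p.2 ^ 2 = r}
      = (Finset.univ.filter (fun p : F × F => A * p.1 ^ 2 + B * p.2 ^ 2 = r)).card :=
    fun r => natCard_subtype_eq_filter _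
  have htot : (Finset.univ : Finset (F × F)).card
      = ∑ r : F, (Finset.univ.filter (fun p : F × F => A * p.1 ^ 2 + B * p.2 ^ 2 = r)).card :=
    Finset.card_eq_sum_card_fiberwise (fun x _ => Finset.mem_univ _)
  have hconst : ∀ r : F, r ≠ 0 →
      (Finset.univ.filter (fun p : F × F => A * p.1 ^ 2 + B * p.2 ^ 2 = r)).card
      = (Finset.univ.filter (fun p : F × F => A * p.1 ^ 2 + B * p.2 ^ 2 = t)).card := by
    intro r hr
    refine le_antisymm ?_ ?_
    · rw [← hNt, ← hNt]; exact count_binary_aniso_le A B hA hB hani hch r t hr ht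
    · rw [← hNt, ← hNt]; exact count_binary_aniso_le A B hA hB hani hch t r ht hr
  rw [← Finset.add_sum_erase _ _ (Finset.mem_univ (0 : F))] at htot
  have hzero : (Finset.univ.filter (fun p : F × F => A * p.1 ^ 2 + B * p.2 ^ 2 = (0:F))).card = 1 := by
    rw [← hNt]; exact count_binary_aniso_zero A B hA hani
  have hsum : ∑ r ∈ Finset.univ.erase (0 : F),
      (Finset.univ.filter (fun p : F × F => A * p.1 ^ 2 + B * p.2 ^ 2 = r)).card
      = (Fintype.card F - 1) *
        (Finset.univ.filter (fun p : F × F => A * p.1 ^ 2 + B * p.2 ^ 2 = t)).card := by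
    rw [Finset.sum_congr rfl (fun r hr => hconst r (Finset.mem_erase.mp hr).1),
      Finset.sum_const, smul_eq_mul, Finset.card_erase_of_mem (Finset.mem_univ _),
      Finset.card_univ]
  rw [hzero, hsum, Finset.card_univ, Fintype.card_prod] at htot
  rw [hNt]
  have hq2 : 2 ≤ Fintype.card F := Fintype.one_lt_card
  generalize hgen : (Finset.univ.filter (fun p : F × F => A * p.1 ^ 2 + B * p.2 ^ 2 = t)).card = N at htot ⊢
  generalize hq : Fintype.card F = q at htot hq2 ⊢
  obtain ⟨m, rfl⟩ : ∃ m, q = m + 2 := ⟨q - 2, by omega⟩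
  have e2 : (m + 2) - 1 = m + 1 := by omega
  rw [e2] at htot
  have htotz : ((m : ℤ) + 2) * ((m : ℤ) + 2) = 1 + ((m : ℤ) + 1) * (N : ℤ) := by
    exact_mod_cast htot
  have e3 : ((m : ℤ) + 1) * (N : ℤ) = ((m : ℤ) + 1) * ((m : ℤ) + 3) := by
    linear_combination -htotz
  have e4 : (N : ℤ) = (m : ℤ) + 3 := by
    have hmne : ((m : ℤ) + 1) ≠ 0 := by positivity
    exact mul_left_cancel₀ hmne e3
  exact_mod_cast e4

lemma card_diag (A B C : F) (hA : A ≠ 0) (hB : B ≠ 0) (hC : C ≠ 0) (hch : ringChar F ≠ 2) :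
    Nat.card {v : Fin 3 → F // A * v 0 ^ 2 + B * v 1 ^ 2 + C * v 2 ^ 2 = 0}
      = Fintype.card F ^ 2 := by
  classical
  have h2 : (2 : F) ≠ 0 := Ring.two_ne_zero hch
  rw [natCard_subtype_eq_filter]
  set S : Finset (Fin 3 → F) :=
    Finset.univ.filter (fun v : Fin 3 → F => A * v 0 ^ 2 + B * v 1 ^ 2 + C * v 2 ^ 2 = 0) with hS
  have hfib := Finset.card_eq_sum_card_fiberwise
    (f := fun v : Fin 3 → F => v 2) (s := S) (t := Finset.univ) (fun x _ => Finset.mem_univ _)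
  have hfibeq : ∀ z : F, (S.filter (fun v => v 2 = z)).card
      = Nat.card {p : F × F // A * p.1 ^ 2 + B * p.2 ^ 2 = -(C * z ^ 2)} := by
    intro z
    rw [natCard_subtype_eq_filter]
    have himg : S.filter (fun v => v 2 = z)
        = (Finset.univ.filter (fun p : F × F => A * p.1 ^ 2 + B * p.2 ^ 2 = -(C * z ^ 2))).image
            (fun p : F × F => ![p.1, p.2, z]) := by
      ext v
      simp only [hS, Finset.mem_filter, Finset.mem_univ, true_and, Finset.mem_image,
        Finset.filter_filter]
      constructor
      · rintro ⟨hv, hz⟩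
        refine ⟨(v 0, v 1), ?_, ?_⟩
        · subst hz; linear_combination hv
        · funext i
          fin_cases i <;> simp [hz.symm]
      · rintro ⟨p, hp, rfl⟩
        constructor
        · show A * p.1 ^ 2 + B * p.2 ^ 2 + C * z ^ 2 = 0
          linear_combination hp
        · rfl
    rw [himg, Finset.card_image_of_injective]
    intro p p' hpp
    have h0 := congrFun hpp 0
    have h1 := congrFun hpp 1
    simp only [Matrix.cons_val_zero, Matrix.cons_val_one, Matrix.head_cons] at h0 h1
    exact Prod.ext h0 h1
  rw [Finset.sum_congr rfl (fun z _ => hfibeq z)] at hfib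
  rw [← Finset.add_sum_erase _ _ (Finset.mem_univ (0 : F))] at hfib
  have hzero0 : -(C * (0:F) ^ 2) = 0 := by ring
  rw [hzero0] at hfib
  have hq2 : 2 ≤ Fintype.card F := Fintype.one_lt_card
  by_cases hiso : ∃ s : F, A * s ^ 2 = -B
  · obtain ⟨s, hs⟩ := hiso
    have hv0 : Nat.card {p : F × F // A * p.1 ^ 2 + B * p.2 ^ 2 = (0:F)}
        = 2 * Fintype.card F - 1 := by
      rw [count_binary_iso A B s hA hB h2 hs]; exact card_mul_eq_zero A hA
    have hvr : ∀ z : F, z ∈ Finset.univ.erase (0:F) →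
        Nat.card {p : F × F // A * p.1 ^ 2 + B * p.2 ^ 2 = -(C * z ^ 2)}
        = Fintype.card F - 1 := by
      intro z hz
      have hzne : z ≠ 0 := (Finset.mem_erase.mp hz).1
      have hne : -(C * z ^ 2) ≠ 0 := by
        simp only [neg_ne_zero]
        exact mul_ne_zero hC (pow_ne_zero _ hzne)
      rw [count_binary_iso A B s hA hB h2 hs]; exact card_mul_eq A _ hA hne
    rw [hv0, Finset.sum_congr rfl hvr, Finset.sum_const, smul_eq_mul,
      Finset.card_erase_of_mem (Finset.mem_univ _), Finset.card_univ] at hfib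
    rw [hfib]
    generalize Fintype.card F = q at hq2 ⊢
    obtain ⟨m, rfl⟩ : ∃ m, q = m + 2 := ⟨q - 2, by omega⟩
    have e1 : (m + 2) ^ 2 = m * m + 4 * m + 4 := by ring
    have e2 : (m + 2 - 1) * (m + 2 - 1) = m * m + 2 * m + 1 := by
      have : m + 2 - 1 = m + 1 := by omega
      rw [this]; ring
    omega
  · push_neg at hiso
    have hv0 : Nat.card {p : F × F // A * p.1 ^ 2 + B * p.2 ^ 2 = (0:F)} = 1 :=
      count_binary_aniso_zero A B hA hiso
    have hvr : ∀ z : F, z ∈ Finset.univ.erase (0:F) →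
        Nat.card {p : F × F // A * p.1 ^ 2 + B * p.2 ^ 2 = -(C * z ^ 2)}
        = Fintype.card F + 1 := by
      intro z hz
      have hzne : z ≠ 0 := (Finset.mem_erase.mp hz).1
      have hne : -(C * z ^ 2) ≠ 0 := by
        simp only [neg_ne_zero]
        exact mul_ne_zero hC (pow_ne_zero _ hzne)
      exact count_binary_aniso A B hA hB hiso hch _ hne
    rw [hv0, Finset.sum_congr rfl hvr, Finset.sum_const, smul_eq_mul,
      Finset.card_erase_of_mem (Finset.mem_univ _), Finset.card_univ] at hfib
    rw [hfib]
    generalize Fintype.card F = q at hq2 ⊢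
    obtain ⟨m, rfl⟩ : ∃ m, q = m + 2 := ⟨q - 2, by omega⟩
    have e1 : (m + 2) ^ 2 = m * m + 4 * m + 4 := by ring
    have e2 : (m + 2 - 1) * (m + 2 + 1) = m * m + 4 * m + 3 := by
      have : m + 2 - 1 = m + 1 := by omega
      rw [this]; ring
    omega

lemma rank_le_two_of_det_eq_zero {A : Matrix (Fin 3) (Fin 3) F} (h : A.det = 0) :
    A.rank ≤ 2 := by
  classical
  obtain ⟨v, hv, hAv⟩ := Matrix.exists_mulVec_eq_zero_iff.mpr h
  have hker : 0 < Module.finrank F (LinearMap.ker A.mulVecLin) := by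
    rw [Module.finrank_pos_iff]
    exact ⟨⟨⟨v, by rw [LinearMap.mem_ker, Matrix.mulVecLin_apply, hAv]⟩, 0, by
      simp only [ne_eq, Submodule.mk_eq_zero]; exact hv⟩⟩
  have h2 := LinearMap.finrank_range_add_finrank_ker A.mulVecLin
  rw [Module.finrank_fin_fun] at h2
  have hrk : A.rank = Module.finrank F (LinearMap.range A.mulVecLin) := rfl
  omega

lemma two_le_rank_of_minor {A : Matrix (Fin 3) (Fin 3) F} {i k j l : Fin 3}
    (h : A i j * A k l - A i l * A k j ≠ 0) : 2 ≤ A.rank := by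
  classical
  set v : Fin 3 → F := fun r => A r j with hv
  set w : Fin 3 → F := fun r => A r l with hw
  have hli : LinearIndependent F ![v, w] := by
    rw [LinearIndependent.pair_iff]
    intro s t hst
    have h1 : s * A i j + t * A i l = 0 := by
      have := congrFun hst i
      simpa [hv, hw, Pi.add_apply, Pi.smul_apply, smul_eq_mul] using this
    have h2 : s * A k j + t * A k l = 0 := by
      have := congrFun hst k
      simpa [hv, hw, Pi.add_apply, Pi.smul_apply, smul_eq_mul] using this
    constructor
    · have hs : s * (A i j * A k l - A i l * A k j) = 0 := by
        linear_combination A k l * h1 - A i l * h2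
      exact (mul_eq_zero.mp hs).resolve_right h
    · have ht : t * (A i j * A k l - A i l * A k j) = 0 := by
        linear_combination A i j * h2 - A k j * h1
      exact (mul_eq_zero.mp ht).resolve_right h
  have hspan : Submodule.span F (Set.range ![v, w]) ≤ LinearMap.range A.mulVecLin := by
    rw [Submodule.span_le]
    intro x hx
    obtain ⟨c, rfl⟩ := hx
    fin_cases c
    · exact ⟨Pi.single j 1, by funext r; simp [Matrix.mulVecLin_apply, Matrix.mulVec_single, hv]⟩
    · exact ⟨Pi.single l 1, by funext r; simp [Matrix.mulVecLin_apply, Matrix.mulVec_single, hw]⟩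
  have hfr : Module.finrank F (Submodule.span F (Set.range ![v, w])) = 2 := by
    rw [finrank_span_eq_card hli]
    simp
  have hmono := Submodule.finrank_mono hspan
  rw [hfr] at hmono
  exact hmono

lemma M_det (y : Fin 6 → F) : (M y).det =
    y 0 * y 3 * y 5 + 2 * (y 1 * y 4 * y 2) - y 2 * y 3 * y 2 - y 1 * y 1 * y 5
      - y 0 * y 4 * y 4 := by
  rw [Matrix.det_fin_three]
  show y 0 * y 3 * y 5 - y 0 * y 4 * y 4 - y 1 * y 1 * y 5 + y 1 * y 4 * y 2 +
      y 2 * y 1 * y 4 - y 2 * y 3 * y 2 = _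
  ring

lemma card_Q_zero (y : Fin 6 → F) (hy : y ≠ 0) (hrk : (M y).rank ≠ 2) :
    Nat.card {l : Fin 3 → F // Bform (mulLin l l) y = 0} = Fintype.card F ^ 2 := by
  classical
  have hsymM : ∀ a b : Fin 3, (M y) a b = (M y) b a := by
    intro a b; fin_cases a <;> fin_cases b <;> rfl
  by_cases hdet : (M y).det = 0
  · -- singular case: M = c • u ⊗ u
    have hminor : ∀ i k j l : Fin 3, (M y) i j * (M y) k l - (M y) i l * (M y) k j = 0 := by
      intro i k j l
      by_contra hne
      exact hrk (le_antisymm (rank_le_two_of_det_eq_zero hdet) (two_le_rank_of_minor hne))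
    obtain ⟨k, hk⟩ : ∃ k : Fin 3, (M y) k k ≠ 0 := by
      by_contra hcon
      push_neg at hcon
      apply hy
      have o01 : (M y) 0 1 = 0 := by
        have hm := hminor 0 1 0 1
        rw [hcon 0, hsymM 1 0] at hm
        have : (M y) 0 1 * (M y) 0 1 = 0 := by linear_combination -hm
        exact mul_self_eq_zero.mp this
      have o02 : (M y) 0 2 = 0 := by
        have hm := hminor 0 2 0 2
        rw [hcon 0, hsymM 2 0] at hm
        have : (M y) 0 2 * (M y) 0 2 = 0 := by linear_combination -hm
        exact mul_self_eq_zero.mp this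
      have o12 : (M y) 1 2 = 0 := by
        have hm := hminor 1 2 1 2
        rw [hcon 1, hsymM 2 1] at hm
        have : (M y) 1 2 * (M y) 1 2 = 0 := by linear_combination -hm
        exact mul_self_eq_zero.mp this
      funext i
      fin_cases i
      · exact hcon 0
      · exact o01
      · exact o02
      · exact hcon 1
      · exact o12
      · exact hcon 2
    set c : F := (M y) k k with hc
    set u : Fin 3 → F := fun i => (M y) i k / c with hu
    have hstruct : ∀ i j : Fin 3, (M y) i j = c * u i * u j := by
      intro i j
      have hm := hminor i k j k
      have h1 : (M y) i j * c = (M y) i k * (M y) j k := by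
        linear_combination hm + (M y) i k * (hsymM k j)
      show (M y) i j = c * ((M y) i k / c) * ((M y) j k / c)
      field_simp
      linear_combination h1
    have hune : u ≠ 0 := by
      intro h0
      apply hk
      have := congrFun h0 k
      simp only [hu, Pi.zero_apply] at this
      rw [div_eq_zero_iff] at this
      rcases this with h | h
      · exact h
      · exact absurd h hk
    have e0 : y 0 = c * u 0 * u 0 := hstruct 0 0
    have e1 : y 1 = c * u 0 * u 1 := hstruct 0 1
    have e2 : y 2 = c * u 0 * u 2 := hstruct 0 2
    have e3 : y 3 = c * u 1 * u 1 := hstruct 1 1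
    have e4 : y 4 = c * u 1 * u 2 := hstruct 1 2
    have e5 : y 5 = c * u 2 * u 2 := hstruct 2 2
    have key : ∀ l : Fin 3 → F, Bform (mulLin l l) y
        = c * (u 0 * l 0 + u 1 * l 1 + u 2 * l 2) ^ 2 := by
      intro l
      show l 0 * l 0 * y 0 + (l 0 * l 1 + l 1 * l 0) * y 1 + (l 0 * l 2 + l 2 * l 0) * y 2
          + l 1 * l 1 * y 3 + (l 1 * l 2 + l 2 * l 1) * y 4 + l 2 * l 2 * y 5
          = c * (u 0 * l 0 + u 1 * l 1 + u 2 * l 2) ^ 2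
      linear_combination (l 0 * l 0) * e0 + (l 0 * l 1 + l 1 * l 0) * e1
        + (l 0 * l 2 + l 2 * l 0) * e2 + (l 1 * l 1) * e3 + (l 1 * l 2 + l 2 * l 1) * e4
        + (l 2 * l 2) * e5
    have ecard : Nat.card {l : Fin 3 → F // Bform (mulLin l l) y = 0}
        = Nat.card {l : Fin 3 → F // u 0 * l 0 + u 1 * l 1 + u 2 * l 2 = 0} := by
      apply Nat.card_congr
      refine Equiv.subtypeEquivRight (fun l => ?_)
      rw [key l]
      constructor
      · intro h
        have := (mul_eq_zero.mp h).resolve_left hk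
        exact pow_eq_zero_iff two_ne_zero |>.mp this
      · intro h; rw [h]; ring
    rw [ecard]
    exact card_linsol u hune
  · by_cases hchar : ringChar F = 2
    · -- characteristic two
      have h2 : (2 : F) = 0 := by
        have h := ringChar.Nat.cast_ringChar (R := F)
        rw [hchar] at h
        exact_mod_cast h
      have hdiag : ¬(y 0 = 0 ∧ y 3 = 0 ∧ y 5 = 0) := by
        rintro ⟨h0, h3, h5⟩
        apply hdet
        rw [M_det, h0, h3, h5]
        linear_combination (y 1 * y 4 * y 2) * h2
      have hsq : ∀ a : F, ∃ s : F, s * s = a := by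
        intro a
        obtain ⟨s, hs⟩ := FiniteField.isSquare_of_char_two hchar a
        exact ⟨s, hs.symm⟩
      obtain ⟨s0, hs0⟩ := hsq (y 0)
      obtain ⟨s1, hs1⟩ := hsq (y 3)
      obtain ⟨s2, hs2⟩ := hsq (y 5)
      set u : Fin 3 → F := ![s0, s1, s2] with hudef
      have hune : u ≠ 0 := by
        intro h0
        apply hdiag
        have h0' := congrFun h0
        refine ⟨?_, ?_, ?_⟩
        · rw [← hs0]; have := h0' 0; simp [hudef] at this; rw [this]; ring
        · rw [← hs1]; have := h0' 1; simp [hudef] at this; rw [this]; ring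
        · rw [← hs2]; have := h0' 2; simp [hudef] at this; rw [this]; ring
      have key : ∀ l : Fin 3 → F, Bform (mulLin l l) y
          = (u 0 * l 0 + u 1 * l 1 + u 2 * l 2) ^ 2 := by
        intro l
        show l 0 * l 0 * y 0 + (l 0 * l 1 + l 1 * l 0) * y 1 + (l 0 * l 2 + l 2 * l 0) * y 2
            + l 1 * l 1 * y 3 + (l 1 * l 2 + l 2 * l 1) * y 4 + l 2 * l 2 * y 5
            = (s0 * l 0 + s1 * l 1 + s2 * l 2) ^ 2
        linear_combination (l 0 * l 0) * hs0.symm + (l 1 * l 1) * hs1.symm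
          + (l 2 * l 2) * hs2.symm
          + (l 0 * l 1 * y 1 + l 0 * l 2 * y 2 + l 1 * l 2 * y 4
              - s0 * s1 * l 0 * l 1 - s0 * s2 * l 0 * l 2 - s1 * s2 * l 1 * l 2) * h2
      have ecard : Nat.card {l : Fin 3 → F // Bform (mulLin l l) y = 0}
          = Nat.card {l : Fin 3 → F // u 0 * l 0 + u 1 * l 1 + u 2 * l 2 = 0} := by
        apply Nat.card_congr
        refine Equiv.subtypeEquivRight (fun l => ?_)
        rw [key l]
        constructor
        · exact fun h => pow_eq_zero_iff two_ne_zero |>.mp h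
        · intro h; rw [h]; ring
      rw [ecard]
      exact card_linsol u hune
    · -- odd characteristic, nondegenerate: diagonalize
      have h2 : (2 : F) ≠ 0 := Ring.two_ne_zero hchar
      letI : Invertible (2 : F) := invertibleOfNonzero h2
      set Bl : LinearMap.BilinForm F (Fin 3 → F) := Matrix.toLinearMap₂' F (M y) with hBl
      have happ : ∀ v w : Fin 3 → F, Bl v w = ∑ i, ∑ j, v i * (M y) i j * w j := by
        intro v w
        rw [hBl, Matrix.toLinearMap₂'_apply]
        simp only [smul_eq_mul, Fin.sum_univ_three]
        ring
      have hsymm : LinearMap.IsSymm Bl := by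
        rw [LinearMap.isSymm_def]
        intro v w
        rw [RingHom.id_apply, happ, happ]
        simp only [Fin.sum_univ_three]
        rw [hsymM 1 0, hsymM 2 0, hsymM 2 1]
        ring
      have hnd : Bl.SeparatingLeft :=
        (Matrix.nondegenerate_of_det_ne_zero hdet).toLinearMap₂'.1
      obtain ⟨b, hb⟩ := LinearMap.BilinForm.exists_orthogonal_basis hsymm
      have hdim : Module.finrank F (Fin 3 → F) = 3 := Module.finrank_fin_fun F
      let b' : Module.Basis (Fin 3) F (Fin 3 → F) := b.reindex (finCongr hdim)
      have hb' : ∀ i j : Fin 3, i ≠ j → Bl (b' i) (b' j) = 0 := by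
        intro i j hij
        have : b' i = b ((finCongr hdim).symm i) := Module.Basis.reindex_apply b (finCongr hdim) i
        rw [this, Module.Basis.reindex_apply b (finCongr hdim) j]
        exact LinearMap.isOrthoᵢ_def.mp hb _ _ ((finCongr hdim).symm.injective.ne hij)
      have hαne : ∀ i : Fin 3, Bl (b' i) (b' i) ≠ 0 := by
        intro i h0
        apply b'.ne_zero i
        apply hnd
        intro w
        have hw := b'.sum_equivFun w
        calc Bl (b' i) w = Bl (b' i) (∑ j, b'.equivFun w j • b' j) := by rw [hw]
          _ = ∑ j, b'.equivFun w j * Bl (b' i) (b' j) := by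
              rw [map_sum]
              exact Finset.sum_congr rfl (fun j _ => by rw [_root_.map_smul, smul_eq_mul])
          _ = 0 := by
              apply Finset.sum_eq_zero
              intro j _
              by_cases hij : j = i
              · subst hij; rw [h0]; ring
              · rw [hb' i j (Ne.symm hij)]; ring
      have hQB : ∀ l : Fin 3 → F, Bform (mulLin l l) y = Bl l l := by
        intro l
        rw [happ]
        show l 0 * l 0 * y 0 + (l 0 * l 1 + l 1 * l 0) * y 1 + (l 0 * l 2 + l 2 * l 0) * y 2
            + l 1 * l 1 * y 3 + (l 1 * l 2 + l 2 * l 1) * y 4 + l 2 * l 2 * y 5 = _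
        simp only [Fin.sum_univ_three]
        show _ = l 0 * y 0 * l 0 + l 0 * y 1 * l 1 + l 0 * y 2 * l 2
            + (l 1 * y 1 * l 0 + l 1 * y 3 * l 1 + l 1 * y 4 * l 2)
            + (l 2 * y 2 * l 0 + l 2 * y 4 * l 1 + l 2 * y 5 * l 2)
        ring
      have hdiagform : ∀ l : Fin 3 → F,
          Bl l l = Bl (b' 0) (b' 0) * (b'.equivFun l 0) ^ 2
            + Bl (b' 1) (b' 1) * (b'.equivFun l 1) ^ 2
            + Bl (b' 2) (b' 2) * (b'.equivFun l 2) ^ 2 := by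
        intro l
        set cf := b'.equivFun l with hcf
        have hl : l = ∑ j, cf j • b' j := (b'.sum_equivFun l).symm
        rw [hl]
        simp only [map_sum, LinearMap.sum_apply, _root_.map_smul, LinearMap.smul_apply,
          smul_eq_mul, Fin.sum_univ_three, map_add, LinearMap.add_apply]
        rw [hb' 0 1 (by decide), hb' 0 2 (by decide), hb' 1 0 (by decide),
          hb' 1 2 (by decide), hb' 2 0 (by decide), hb' 2 1 (by decide)]
        ring
      have ecard : Nat.card {l : Fin 3 → F // Bform (mulLin l l) y = 0}
          = Nat.card {v : Fin 3 → F // Bl (b' 0) (b' 0) * v 0 ^ 2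
              + Bl (b' 1) (b' 1) * v 1 ^ 2 + Bl (b' 2) (b' 2) * v 2 ^ 2 = 0} := by
        apply Nat.card_congr
        refine Equiv.trans (Equiv.subtypeEquivRight (fun l => ?_))
          (b'.equivFun.toEquiv.subtypeEquiv (fun l => by exact Iff.rfl))
        rw [hQB, hdiagform]
        exact Iff.rfl
      rw [ecard]
      exact card_diag _ _ _ (hαne 0) (hαne 1) (hαne 2) hchar

lemma sq_aux {t li lj mj : F} (ht : t * li ≠ 0)
    (hcross : 2 * (t * li) * mj = 2 * t ^ 2 * (li * lj))
    (hsq : mj * mj = t ^ 2 * (lj * lj)) : mj = t * lj := by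
  have h2 : 2 * (mj - t * lj) = 0 := by
    have hm : (t * li) * (2 * (mj - t * lj)) = (t * li) * 0 := by
      rw [mul_zero]
      linear_combination hcross
    exact mul_left_cancel₀ ht hm
  have h3 : (mj - t * lj) ^ 2 = 0 := by
    linear_combination hsq - (t * lj) * h2
  have h4 := pow_eq_zero_iff two_ne_zero |>.mp h3
  linear_combination h4

lemma mulLin_eq_zero_iff (l : Fin 3 → F) : mulLin l l = 0 ↔ l = 0 := by
  constructor
  · intro h
    funext i
    have h0 := congrFun h 0
    have h3 := congrFun h 3
    have h5 := congrFun h 5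
    simp only [mulLin, Pi.zero_apply] at h0 h3 h5
    have e0 : l 0 = 0 := mul_self_eq_zero.mp h0
    have e1 : l 1 = 0 := mul_self_eq_zero.mp h3
    have e2 : l 2 = 0 := mul_self_eq_zero.mp h5
    fin_cases i <;> simp [e0, e1, e2]
  · intro h
    subst h
    funext i
    fin_cases i <;> norm_num [mulLin]

lemma veronese_aux {m l : Fin 3 → F} {c : F} (h : mulLin m m = c • mulLin l l)
    (hl : l ≠ 0) (hm : m ≠ 0) : ∃ t : F, t ≠ 0 ∧ m = t • l := by
  have e : ∀ k : Fin 6, mulLin m m k = c * mulLin l l k := by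
    intro k; rw [h]; rfl
  have e0 : m 0 * m 0 = c * (l 0 * l 0) := e 0
  have e1 : m 0 * m 1 + m 1 * m 0 = c * (l 0 * l 1 + l 1 * l 0) := e 1
  have e2 : m 0 * m 2 + m 2 * m 0 = c * (l 0 * l 2 + l 2 * l 0) := e 2
  have e3 : m 1 * m 1 = c * (l 1 * l 1) := e 3
  have e4 : m 1 * m 2 + m 2 * m 1 = c * (l 1 * l 2 + l 2 * l 1) := e 4
  have e5 : m 2 * m 2 = c * (l 2 * l 2) := e 5
  have hc : c ≠ 0 := by
    intro h0
    subst h0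
    apply hm
    funext i
    simp only [zero_mul] at e0 e3 e5
    have f0 : m 0 = 0 := mul_self_eq_zero.mp e0
    have f1 : m 1 = 0 := mul_self_eq_zero.mp e3
    have f2 : m 2 = 0 := mul_self_eq_zero.mp e5
    fin_cases i <;> simp [f0, f1, f2]
  obtain ⟨i, hi⟩ : ∃ i, l i ≠ 0 := by
    by_contra hcon; push_neg at hcon; exact hl (funext hcon)
  have build : ∀ t : F, t ≠ 0 → m 0 = t * l 0 → m 1 = t * l 1 → m 2 = t * l 2 →
      ∃ t : F, t ≠ 0 ∧ m = t • l := by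
    intro t ht h0 h1 h2
    refine ⟨t, ht, ?_⟩
    funext j
    have : (t • l) j = t * l j := rfl
    fin_cases j <;> simp only [Pi.smul_apply, smul_eq_mul]
    · exact h0
    · exact h1
    · exact h2
  fin_cases i
  · set t := m 0 / l 0 with htdef
    have hm0 : m 0 ≠ 0 := by
      intro h0; rw [h0] at e0
      exact hi (by
        have : c * (l 0 * l 0) = 0 := by linear_combination -e0
        have := (mul_eq_zero.mp this).resolve_left hc
        exact mul_self_eq_zero.mp this)
    have ht : t ≠ 0 := div_ne_zero hm0 hi
    have hm0t : m 0 = t * l 0 := by rw [htdef]; exact (div_mul_cancel₀ _ hi).symm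
    have hct : c = t ^ 2 := by
      have h' : (t ^ 2 - c) * (l 0 * l 0) = 0 := by
        linear_combination e0 - (m 0 + t * l 0) * hm0t
      have := (mul_eq_zero.mp h').resolve_right (by
        intro hz; exact hi (mul_self_eq_zero.mp hz))
      linear_combination -this
    refine build t ht hm0t ?_ ?_
    · refine sq_aux (t := t) (li := l 0) (ht := by rw [← hm0t]; exact hm0) ?_ ?_
      · rw [← hm0t, ← hct]; linear_combination e1
      · rw [← hct]; linear_combination e3
    · refine sq_aux (t := t) (li := l 0) (ht := by rw [← hm0t]; exact hm0) ?_ ?_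
      · rw [← hm0t, ← hct]; linear_combination e2
      · rw [← hct]; linear_combination e5
  · set t := m 1 / l 1 with htdef
    have hm1 : m 1 ≠ 0 := by
      intro h0; rw [h0] at e3
      exact hi (by
        have : c * (l 1 * l 1) = 0 := by linear_combination -e3
        have := (mul_eq_zero.mp this).resolve_left hc
        exact mul_self_eq_zero.mp this)
    have ht : t ≠ 0 := div_ne_zero hm1 hi
    have hm1t : m 1 = t * l 1 := by rw [htdef]; exact (div_mul_cancel₀ _ hi).symm
    have hct : c = t ^ 2 := by
      have h' : (t ^ 2 - c) * (l 1 * l 1) = 0 := by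
        linear_combination e3 - (m 1 + t * l 1) * hm1t
      have := (mul_eq_zero.mp h').resolve_right (by
        intro hz; exact hi (mul_self_eq_zero.mp hz))
      linear_combination -this
    refine build t ht ?_ hm1t ?_
    · refine sq_aux (t := t) (li := l 1) (ht := by rw [← hm1t]; exact hm1) ?_ ?_
      · rw [← hm1t, ← hct]; linear_combination e1
      · rw [← hct]; linear_combination e0
    · refine sq_aux (t := t) (li := l 1) (ht := by rw [← hm1t]; exact hm1) ?_ ?_
      · rw [← hm1t, ← hct]; linear_combination e4
      · rw [← hct]; linear_combination e5
  · set t := m 2 / l 2 with htdef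
    have hm2 : m 2 ≠ 0 := by
      intro h0; rw [h0] at e5
      exact hi (by
        have : c * (l 2 * l 2) = 0 := by linear_combination -e5
        have := (mul_eq_zero.mp this).resolve_left hc
        exact mul_self_eq_zero.mp this)
    have ht : t ≠ 0 := div_ne_zero hm2 hi
    have hm2t : m 2 = t * l 2 := by rw [htdef]; exact (div_mul_cancel₀ _ hi).symm
    have hct : c = t ^ 2 := by
      have h' : (t ^ 2 - c) * (l 2 * l 2) = 0 := by
        linear_combination e5 - (m 2 + t * l 2) * hm2t
      have := (mul_eq_zero.mp h').resolve_right (by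
        intro hz; exact hi (mul_self_eq_zero.mp hz))
      linear_combination -this
    refine build t ht ?_ ?_ hm2t
    · refine sq_aux (t := t) (li := l 2) (ht := by rw [← hm2t]; exact hm2) ?_ ?_
      · rw [← hm2t, ← hct]; linear_combination e2
      · rw [← hct]; linear_combination e0
    · refine sq_aux (t := t) (li := l 2) (ht := by rw [← hm2t]; exact hm2) ?_ ?_
      · rw [← hm2t, ← hct]; linear_combination e4
      · rw [← hct]; linear_combination e3

end Proofs

/-- every squab not of rank two contains exactly `q + 1` double lines. -/
theorem squab_not_rank_two_double_lines (F : Type) [Field F] [Fintype F] (q : ℕ)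
    (hq : Fintype.card F = q) (y : Fin 6 → F) (hy : y ≠ 0) (hrk : (M y).rank ≠ 2) :
    numConics (squab y) IsDoubleLine = q + 1 := by
  classical
  subst hq
  have hBsmul : ∀ (c : F) (a : Fin 6 → F), Bform (c • a) y = c * Bform a y := by
    intro c a
    simp only [Bform, Pi.smul_apply, smul_eq_mul]
    ring
  have hmul_smul : ∀ (t : F) (l : Fin 3 → F), mulLin (t • l) (t • l) = (t ^ 2) • mulLin l l := by
    intro t l
    funext k
    show mulLin (t • l) (t • l) k = t ^ 2 * mulLin l l k
    fin_cases k
    · show t * l 0 * (t * l 0) = t ^ 2 * (l 0 * l 0); ring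
    · show t * l 0 * (t * l 1) + t * l 1 * (t * l 0) = t ^ 2 * (l 0 * l 1 + l 1 * l 0); ring
    · show t * l 0 * (t * l 2) + t * l 2 * (t * l 0) = t ^ 2 * (l 0 * l 2 + l 2 * l 0); ring
    · show t * l 1 * (t * l 1) = t ^ 2 * (l 1 * l 1); ring
    · show t * l 1 * (t * l 2) + t * l 2 * (t * l 1) = t ^ 2 * (l 1 * l 2 + l 2 * l 1); ring
    · show t * l 2 * (t * l 2) = t ^ 2 * (l 2 * l 2); ring
  set f : (Fin 3 → F) → Submodule F (Fin 6 → F) := fun l => Submodule.span F {mulLin l l}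
    with hf
  set D : Finset (Fin 3 → F) :=
    Finset.univ.filter (fun l => l ≠ 0 ∧ Bform (mulLin l l) y = 0) with hD
  set T : Finset (Submodule F (Fin 6 → F)) := D.image f with hT
  -- Step 1 : the set of double-line conics is T
  have hset : {P : Submodule F (Fin 6 → F) |
      ∃ a : Fin 6 → F, a ≠ 0 ∧ a ∈ squab y ∧ IsDoubleLine a ∧ P = Submodule.span F {a}}
      = (↑T : Set (Submodule F (Fin 6 → F))) := by
    ext P
    simp only [Set.mem_setOf_eq, hT, Finset.coe_image, Set.mem_image, Finset.mem_coe, hD,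
      Finset.mem_filter, Finset.mem_univ, true_and]
    constructor
    · rintro ⟨a, ha0, hamem, ⟨c, l, hc, hl, rfl⟩, rfl⟩
      refine ⟨l, ⟨hl, ?_⟩, ?_⟩
      · have hmem : Bform (c • mulLin l l) y = 0 := hamem
        rw [hBsmul] at hmem
        exact (mul_eq_zero.mp hmem).resolve_left hc
      · rw [hf]
        exact (Submodule.span_singleton_smul_eq (IsUnit.mk0 c hc) (mulLin l l)).symm
    · rintro ⟨l, ⟨hl, hQl⟩, rfl⟩
      refine ⟨mulLin l l, ?_, hQl, ⟨1, l, one_ne_zero, hl, (one_smul _ _).symm⟩, rfl⟩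
      intro h0
      exact hl ((mulLin_eq_zero_iff l).mp h0)
  have h1 : numConics (squab y) IsDoubleLine = T.card := by
    rw [numConics, hset, Set.ncard_coe_finset]
  -- Step 2 : fibers of f over D have size q - 1
  have hfiber : ∀ P ∈ T, (D.filter (fun l => f l = P)).card = Fintype.card F - 1 := by
    intro P hP
    obtain ⟨l0, hl0D, rfl⟩ := Finset.mem_image.mp hP
    obtain ⟨hl0, hQ0⟩ := (Finset.mem_filter.mp hl0D).2
    have himg : D.filter (fun l => f l = f l0)
        = (Finset.univ.filter (fun t : F => t ≠ 0)).image (fun t => t • l0) := by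
      ext m
      simp only [Finset.mem_filter, Finset.mem_univ, true_and, Finset.mem_image, hD]
      constructor
      · rintro ⟨⟨hm0, hQm⟩, hfeq⟩
        have hmem : mulLin m m ∈ Submodule.span F {mulLin l0 l0} := by
          have hfeq' : Submodule.span F {mulLin m m} = Submodule.span F {mulLin l0 l0} := hfeq
          rw [← hfeq']
          exact Submodule.mem_span_singleton_self _
        obtain ⟨cc, hcc⟩ := Submodule.mem_span_singleton.mp hmem
        obtain ⟨t, ht, htl⟩ := veronese_aux hcc.symm hl0 hm0
        exact ⟨t, ht, htl.symm⟩
      · rintro ⟨t, ht, rfl⟩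
        refine ⟨⟨?_, ?_⟩, ?_⟩
        · exact smul_ne_zero ht hl0
        · rw [hmul_smul, hBsmul, hQ0, mul_zero]
        · show Submodule.span F {mulLin (t • l0) (t • l0)} = Submodule.span F {mulLin l0 l0}
          rw [hmul_smul]
          exact Submodule.span_singleton_smul_eq (IsUnit.mk0 _ (pow_ne_zero 2 ht)) _
    rw [himg, Finset.card_image_of_injective _ (fun t t' htt => ?_), Finset.filter_ne',
      Finset.card_erase_of_mem (Finset.mem_univ _), Finset.card_univ]
    have hsub : (t - t') • l0 = 0 := by
      rw [sub_smul, htt, sub_self]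
    rcases smul_eq_zero.mp hsub with h | h
    · exact sub_eq_zero.mp h
    · exact absurd h hl0
  -- Step 3 : counting D
  have hcnt := card_Q_zero y hy hrk
  have hD0 : D = (Finset.univ.filter (fun l : Fin 3 → F => Bform (mulLin l l) y = 0)).erase 0 := by
    ext l
    simp only [hD, Finset.mem_filter, Finset.mem_univ, true_and, Finset.mem_erase]
  have hzero_mem : (0 : Fin 3 → F) ∈
      Finset.univ.filter (fun l : Fin 3 → F => Bform (mulLin l l) y = 0) := by
    simp only [Finset.mem_filter, Finset.mem_univ, true_and]
    rw [(mulLin_eq_zero_iff (0 : Fin 3 → F)).mpr rfl]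
    simp [Bform]
  have h3 : D.card = Fintype.card F ^ 2 - 1 := by
    rw [hD0, Finset.card_erase_of_mem hzero_mem, ← natCard_subtype_eq_filter, hcnt]
  -- Step 4 : assemble
  have h2' : D.card = T.card * (Fintype.card F - 1) := by
    rw [Finset.card_eq_sum_card_fiberwise (fun l hl => Finset.mem_image_of_mem f hl)]
    rw [Finset.sum_congr rfl hfiber, Finset.sum_const, smul_eq_mul]
  have hq2 : 2 ≤ Fintype.card F := Fintype.one_lt_card
  rw [h1]
  have hkey : T.card * (Fintype.card F - 1) = Fintype.card F ^ 2 - 1 := by rw [← h2', h3]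
  have harith : (Fintype.card F + 1) * (Fintype.card F - 1) = Fintype.card F ^ 2 - 1 := by
    generalize Fintype.card F = n at hq2 ⊢
    obtain ⟨m, rfl⟩ : ∃ m, n = m + 2 := ⟨n - 2, by omega⟩
    have e1 : (m + 2) ^ 2 = m * m + 4 * m + 4 := by ring
    have e2 : (m + 2 + 1) * (m + 2 - 1) = m * m + 4 * m + 3 := by
      have : m + 2 - 1 = m + 1 := by omega
      rw [this]; ring
    omega
  rw [← harith] at hkey
  exact Nat.eq_of_mul_eq_mul_right (by omega) hkey

end Conics
end

section
/- Let q be any prime power and F = GF(q). Let W be the 4-dimensional subspace of quadratic forms over F spanned by X0X1, X0X2, X1X2 and X2^2 (the web of conics associated with the line-orbit o_5). Then among the q^3+q^2+q+1 conics of W there are exactly 1 double line, exactly 2q^2+q pairs of real lines, no pairs of imaginary lines, and exactly q^3−q^2 nonsingular conics. -/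
open Matrix

namespace Conics

-- auxiliary lemmas (to be inserted before the theorem)
section WebAux

section Eval
variable {α : Type}
@[simp] lemma cv6_0 (a0 a1 a2 a3 a4 a5 : α) : (![a0,a1,a2,a3,a4,a5]) 0 = a0 := rfl
@[simp] lemma cv6_1 (a0 a1 a2 a3 a4 a5 : α) : (![a0,a1,a2,a3,a4,a5]) 1 = a1 := rfl
@[simp] lemma cv6_2 (a0 a1 a2 a3 a4 a5 : α) : (![a0,a1,a2,a3,a4,a5]) 2 = a2 := rfl
@[simp] lemma cv6_3 (a0 a1 a2 a3 a4 a5 : α) : (![a0,a1,a2,a3,a4,a5]) 3 = a3 := rfl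
@[simp] lemma cv6_4 (a0 a1 a2 a3 a4 a5 : α) : (![a0,a1,a2,a3,a4,a5]) 4 = a4 := rfl
@[simp] lemma cv6_5 (a0 a1 a2 a3 a4 a5 : α) : (![a0,a1,a2,a3,a4,a5]) 5 = a5 := rfl
@[simp] lemma cv3_0 (a0 a1 a2 : α) : (![a0,a1,a2]) 0 = a0 := rfl
@[simp] lemma cv3_1 (a0 a1 a2 : α) : (![a0,a1,a2]) 1 = a1 := rfl
@[simp] lemma cv3_2 (a0 a1 a2 : α) : (![a0,a1,a2]) 2 = a2 := rfl
end Eval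

variable {F : Type} [Field F]

lemma span_smul_eq {c : F} (hc : c ≠ 0) (v : Fin 6 → F) :
    Submodule.span F {c • v} = Submodule.span F {v} :=
  Submodule.span_singleton_smul_eq (isUnit_iff_ne_zero.2 hc) v

lemma span_prop {x y : Fin 6 → F} (h : Submodule.span F {x} = Submodule.span F {y}) :
    ∃ z : F, z ≠ 0 ∧ z • x = y := by
  obtain ⟨z, hz⟩ := Submodule.span_singleton_eq_span_singleton.mp h
  exact ⟨z, z.ne_zero, hz⟩

lemma memW_iff (a : Fin 6 → F) :
    a ∈ Submodule.span F ({![0, 1, 0, 0, 0, 0], ![0, 0, 1, 0, 0, 0],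
      ![0, 0, 0, 0, 1, 0], ![0, 0, 0, 0, 0, 1]} : Set (Fin 6 → F)) ↔ a 0 = 0 ∧ a 3 = 0 := by
  constructor
  · intro h
    induction h using Submodule.span_induction with
    | mem x hx =>
      rcases hx with h | h | h | h <;> subst h <;> exact ⟨rfl, rfl⟩
    | zero => exact ⟨rfl, rfl⟩
    | add x y _ _ hx hy => exact ⟨by simp [hx.1, hy.1], by simp [hx.2, hy.2]⟩
    | smul c x _ hx => exact ⟨by simp [hx.1], by simp [hx.2]⟩
  · rintro ⟨h0, h3⟩
    have ha : a = a 1 • ![0, 1, 0, 0, 0, 0] + a 2 • ![0, 0, 1, 0, 0, 0]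
        + a 4 • ![0, 0, 0, 0, 1, 0] + a 5 • ![(0:F), 0, 0, 0, 0, 1] := by
      funext i; fin_cases i <;> simp [h0, h3]
    rw [ha]
    refine Submodule.add_mem _ (Submodule.add_mem _ (Submodule.add_mem _ ?_ ?_) ?_) ?_ <;>
      exact Submodule.smul_mem _ _ (Submodule.subset_span (by simp))

/-- normalized representatives -/
def vN (u v w : F) : Fin 6 → F := ![0, 1, u, 0, v, w]
def vB (u v : F) : Fin 6 → F := ![0, 0, 1, 0, u, v]
def vC (u : F) : Fin 6 → F := ![0, 0, 0, 0, 1, u]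

lemma vN_ne_zero (u v w : F) : vN u v w ≠ 0 := by
  intro h; have := congrFun h 1; simp [vN] at this
lemma vB_ne_zero (u v : F) : vB u v ≠ 0 := by
  intro h; have := congrFun h 2; simp [vB] at this
lemma vC_ne_zero (u : F) : vC u ≠ 0 := by
  intro h; have := congrFun h 4; simp [vC] at this

lemma realPair_vN (u v : F) : IsRealPair (vN u v (u * v)) := by
  refine ⟨![0, 1, u], ![1, 0, v], ?_, ?_, ?_⟩
  · rintro ⟨t, ht⟩; have := congrFun ht 0; simp at this
  · rintro ⟨t, ht⟩; have := congrFun ht 1; simp at this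
  · funext i; fin_cases i <;> simp [mulLin, vN]

lemma realPair_vB (u v : F) : IsRealPair (vB u v) := by
  refine ⟨![0, 0, 1], ![1, u, v], ?_, ?_, ?_⟩
  · rintro ⟨t, ht⟩; have := congrFun ht 0; simp at this
  · rintro ⟨t, ht⟩
    have h0 := congrFun ht 0; have h2 := congrFun ht 2
    simp at h0 h2
    rw [← h0] at h2; simp at h2
  · funext i; fin_cases i <;> simp [mulLin, vB]

lemma realPair_vC (u : F) : IsRealPair (vC u) := by
  refine ⟨![0, 0, 1], ![0, 1, u], ?_, ?_, ?_⟩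
  · rintro ⟨t, ht⟩; have := congrFun ht 1; simp at this
  · rintro ⟨t, ht⟩
    have h1 := congrFun ht 1; have h2 := congrFun ht 2
    simp at h1 h2
    rw [← h1] at h2; simp at h2
  · funext i; fin_cases i <;> simp [mulLin, vC]

lemma realPair_classify {a : Fin 6 → F} (ha : a ≠ 0) (h0 : a 0 = 0) (h3 : a 3 = 0)
    (h : IsRealPair a) :
    (a 1 = 0 ∧ ¬ (a 2 = 0 ∧ a 4 = 0)) ∨ (a 1 ≠ 0 ∧ a 1 * a 5 = a 2 * a 4) := by
  obtain ⟨b, c, hb, -, heq⟩ := h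
  have hd : disc a = 0 := by rw [heq]; exact disc_mulLin b c
  have hd' : a 1 * (a 2 * a 4 - a 1 * a 5) = 0 := by
    simp only [disc, h0, h3] at hd; linear_combination hd
  by_cases h1 : a 1 = 0
  · left
    refine ⟨h1, ?_⟩
    rintro ⟨h2, h4⟩
    have h5 : a 5 ≠ 0 := by
      intro h5
      apply ha
      funext i; fin_cases i <;> assumption
    have e0 := congrFun heq 0
    have e2 := congrFun heq 2
    have e4 := congrFun heq 4
    have e5 := congrFun heq 5
    simp only [mulLin, cv6_0, cv6_2, cv6_4, cv6_5, h0, h2, h4] at e0 e2 e4 e5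
    have hb2 : b 2 ≠ 0 := fun hh => h5 (by rw [e5, hh]; ring)
    have hc2 : c 2 ≠ 0 := fun hh => h5 (by rw [e5, hh]; ring)
    have hc0 : c 0 = 0 := by
      have : b 2 * (c 0 * c 0) = 0 := by linear_combination c 0 * e2.symm - c 2 * e0.symm
      rcases mul_eq_zero.mp this with hh | hh
      · exact absurd hh hb2
      · rcases mul_eq_zero.mp hh with hh | hh <;> exact hh
    have hb0 : b 0 = 0 := by
      have : b 0 * c 2 = 0 := by linear_combination e2.symm - b 2 * hc0
      rcases mul_eq_zero.mp this with hh | hh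
      · exact hh
      · exact absurd hh hc2
    have hc1 : c 1 = 0 := by
      have e3 := congrFun heq 3
      simp only [mulLin, cv6_3, h3] at e3
      have : b 2 * (c 1 * c 1) = 0 := by linear_combination c 1 * e4.symm - c 2 * e3.symm
      rcases mul_eq_zero.mp this with hh | hh
      · exact absurd hh hb2
      · rcases mul_eq_zero.mp hh with hh | hh <;> exact hh
    have hb1 : b 1 = 0 := by
      have : b 1 * c 2 = 0 := by linear_combination e4.symm - b 2 * hc1
      rcases mul_eq_zero.mp this with hh | hh
      · exact hh
      · exact absurd hh hc2
    exact hb ⟨c 2 * (b 2)⁻¹, by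
      funext i; fin_cases i <;> simp [hb0, hb1, hc0, hc1]
      field_simp⟩
  · right
    refine ⟨h1, ?_⟩
    rcases mul_eq_zero.mp hd' with hh | hh
    · exact absurd hh h1
    · linear_combination -hh

lemma sing_factor {a : Fin 6 → F} (h0 : a 0 = 0) (h3 : a 3 = 0)
    (hd : disc a = 0) : ∃ l1 l2 : Fin 3 → F, a = mulLin l1 l2 := by
  have hd' : a 1 * (a 2 * a 4 - a 1 * a 5) = 0 := by
    simp only [disc, h0, h3] at hd; linear_combination hd
  by_cases h1 : a 1 = 0
  · exact ⟨![0, 0, 1], ![a 2, a 4, a 5], by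
      funext i; fin_cases i <;> simp [mulLin, h0, h1, h3]⟩
  · have h15 : a 1 * a 5 = a 2 * a 4 := by
      rcases mul_eq_zero.mp hd' with hh | hh
      · exact absurd hh h1
      · linear_combination -hh
    refine ⟨![0, a 1, a 2], ![1, 0, a 4 / a 1], ?_⟩
    funext i; fin_cases i <;> simp [mulLin, h0, h3] <;> field_simp
    linear_combination h15

lemma spanvN3_inj :
    Function.Injective (fun t : F × F × F => Submodule.span F {vN t.1 t.2.1 t.2.2}) := by
  rintro ⟨u, v, w⟩ ⟨u', v', w'⟩ h
  obtain ⟨z, hz, hzz⟩ := span_prop h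
  have h1 := congrFun hzz 1
  have h2 := congrFun hzz 2
  have h4 := congrFun hzz 4
  have h5 := congrFun hzz 5
  simp [vN] at h1 h2 h4 h5
  subst h1
  simp at h2 h4 h5
  simp [h2, h4, h5]

lemma spanvB_inj :
    Function.Injective (fun p : F × F => Submodule.span F {vB p.1 p.2}) := by
  rintro ⟨u, v⟩ ⟨u', v'⟩ h
  obtain ⟨z, hz, hzz⟩ := span_prop h
  have h2 := congrFun hzz 2
  have h4 := congrFun hzz 4
  have h5 := congrFun hzz 5
  simp [vB] at h2 h4 h5
  subst h2
  simp at h4 h5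
  simp [h4, h5]

lemma spanvC_inj :
    Function.Injective (fun u : F => Submodule.span F {vC u}) := by
  intro u u' h
  obtain ⟨z, hz, hzz⟩ := span_prop h
  have h4 := congrFun hzz 4
  have h5 := congrFun hzz 5
  simp [vC] at h4 h5
  subst h4
  simpa using h5

lemma spanvN_ne_spanvB (u v w u' v' : F) :
    Submodule.span F {vN u v w} ≠ Submodule.span F {vB u' v'} := by
  intro h
  obtain ⟨z, hz, hzz⟩ := span_prop h
  have h1 := congrFun hzz 1
  simp [vN, vB] at h1
  exact hz h1

lemma spanvN_ne_spanvC (u v w u' : F) :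
    Submodule.span F {vN u v w} ≠ Submodule.span F {vC u'} := by
  intro h
  obtain ⟨z, hz, hzz⟩ := span_prop h
  have h1 := congrFun hzz 1
  simp [vN, vC] at h1
  exact hz h1

lemma spanvB_ne_spanvC (u v u' : F) :
    Submodule.span F {vB u v} ≠ Submodule.span F {vC u'} := by
  intro h
  obtain ⟨z, hz, hzz⟩ := span_prop h
  have h1 := congrFun hzz 2
  simp [vB, vC] at h1
  exact hz h1

end WebAux


/-- conic counts of the web `(X0X1, X0X2, X1X2, X2^2)` (line-orbit `o_5`). -/
theorem web_o5_conic_counts (F : Type) [Field F] [Fintype F] (q : ℕ)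
    (hq : Fintype.card F = q) (W : Submodule F (Fin 6 → F))
    (hW : W = Submodule.span F ({![0, 1, 0, 0, 0, 0], ![0, 0, 1, 0, 0, 0],
      ![0, 0, 0, 0, 1, 0], ![0, 0, 0, 0, 0, 1]} : Set (Fin 6 → F))) :
    numConics W IsDoubleLine = 1 ∧
    numConics W IsRealPair = 2 * q ^ 2 + q ∧
    numConics W IsImagPair = 0 ∧
    numConics W IsNonsingular = q ^ 3 - q ^ 2 := by
  have hWmem : ∀ a : Fin 6 → F, a ∈ W ↔ a 0 = 0 ∧ a 3 = 0 := by
    intro a; rw [hW]; exact memW_iff a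
  refine ⟨?_, ?_, ?_, ?_⟩
  -- Double lines
  · have hset : {P : Submodule F (Fin 6 → F) |
        ∃ a : Fin 6 → F, a ≠ 0 ∧ a ∈ W ∧ IsDoubleLine a ∧ P = Submodule.span F {a}}
        = {Submodule.span F {![(0:F), 0, 0, 0, 0, 1]}} := by
      ext P
      simp only [Set.mem_setOf_eq, Set.mem_singleton_iff]
      constructor
      · rintro ⟨a, ha, haW, ⟨c, l, hc, hl, hcl⟩, rfl⟩
        obtain ⟨h0, h3⟩ := (hWmem a).mp haW
        have e0 := congrFun hcl 0
        have e3 := congrFun hcl 3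
        simp only [mulLin, Pi.smul_apply, smul_eq_mul, cv6_0, cv6_3, h0, h3] at e0 e3
        have hl0 : l 0 = 0 := by
          rcases mul_eq_zero.mp e0.symm with hh | hh
          · exact absurd hh hc
          · rcases mul_eq_zero.mp hh with hh | hh <;> exact hh
        have hl1 : l 1 = 0 := by
          rcases mul_eq_zero.mp e3.symm with hh | hh
          · exact absurd hh hc
          · rcases mul_eq_zero.mp hh with hh | hh <;> exact hh
        have hl2 : l 2 ≠ 0 := by
          intro hh
          exact hl (by funext i; fin_cases i <;> simp [hl0, hl1, hh])
        have hav : a = (c * (l 2 * l 2)) • ![(0:F), 0, 0, 0, 0, 1] := by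
          rw [hcl]; funext i
          fin_cases i <;> simp [mulLin, hl0, hl1] <;> ring
        rw [hav, span_smul_eq (mul_ne_zero hc (mul_ne_zero hl2 hl2))]
      · rintro rfl
        refine ⟨![0, 0, 0, 0, 0, 1], ?_, (hWmem _).mpr ⟨rfl, rfl⟩,
          ⟨1, ![0, 0, 1], one_ne_zero, ?_, ?_⟩, rfl⟩
        · intro h; have := congrFun h 5; simp at this
        · intro h; have := congrFun h 2; simp at this
        · funext i; fin_cases i <;> simp [mulLin]
    unfold numConics
    rw [hset, Set.ncard_singleton]
  -- Real pairs
  · have hset : {P : Submodule F (Fin 6 → F) |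
        ∃ a : Fin 6 → F, a ≠ 0 ∧ a ∈ W ∧ IsRealPair a ∧ P = Submodule.span F {a}}
        = ((fun p : F × F => Submodule.span F {vN p.1 p.2 (p.1 * p.2)}) '' Set.univ
          ∪ (fun p : F × F => Submodule.span F {vB p.1 p.2}) '' Set.univ)
          ∪ (fun u : F => Submodule.span F {vC u}) '' Set.univ := by
      ext P
      simp only [Set.mem_setOf_eq, Set.mem_union, Set.mem_image, Set.mem_univ, true_and]
      constructor
      · rintro ⟨a, ha, haW, hrp, rfl⟩
        obtain ⟨h0, h3⟩ := (hWmem a).mp haW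
        rcases realPair_classify ha h0 h3 hrp with ⟨h1, h24⟩ | ⟨h1, h15⟩
        · by_cases h2 : a 2 = 0
          · have h4 : a 4 ≠ 0 := fun hh => h24 ⟨h2, hh⟩
            right
            refine ⟨a 5 / a 4, ?_⟩
            have hval : a = a 4 • vC (a 5 / a 4) := by
              funext i; fin_cases i <;> simp [vC, h0, h1, h2, h3] <;> field_simp
            conv_rhs => rw [hval]
            rw [span_smul_eq h4]
          · left; right
            refine ⟨(a 4 / a 2, a 5 / a 2), ?_⟩
            have hval : a = a 2 • vB (a 4 / a 2) (a 5 / a 2) := by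
              funext i; fin_cases i <;> simp [vB, h0, h1, h3] <;> field_simp
            conv_rhs => rw [hval]
            rw [span_smul_eq h2]
        · left; left
          refine ⟨(a 2 / a 1, a 4 / a 1), ?_⟩
          have hval : a = a 1 • vN (a 2 / a 1) (a 4 / a 1) ((a 2 / a 1) * (a 4 / a 1)) := by
            funext i; fin_cases i <;> simp [vN, h0, h3] <;> field_simp
            linear_combination h15
          conv_rhs => rw [hval]
          rw [span_smul_eq h1]
      · rintro ((⟨p, rfl⟩ | ⟨p, rfl⟩) | ⟨u, rfl⟩)
        · exact ⟨vN p.1 p.2 (p.1 * p.2), vN_ne_zero _ _ _, (hWmem _).mpr ⟨rfl, rfl⟩,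
            realPair_vN _ _, rfl⟩
        · exact ⟨vB p.1 p.2, vB_ne_zero _ _, (hWmem _).mpr ⟨rfl, rfl⟩, realPair_vB _ _, rfl⟩
        · exact ⟨vC u, vC_ne_zero _, (hWmem _).mpr ⟨rfl, rfl⟩, realPair_vC _, rfl⟩
    unfold numConics
    rw [hset]
    have hdAB : Disjoint ((fun p : F × F => Submodule.span F {vN p.1 p.2 (p.1 * p.2)}) '' Set.univ)
        ((fun p : F × F => Submodule.span F {vB p.1 p.2}) '' Set.univ) := by
      rw [Set.disjoint_left]
      rintro P ⟨p, -, rfl⟩ ⟨p', -, hp'⟩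
      exact spanvN_ne_spanvB _ _ _ _ _ hp'.symm
    have hdABC : Disjoint ((fun p : F × F => Submodule.span F {vN p.1 p.2 (p.1 * p.2)}) '' Set.univ
        ∪ (fun p : F × F => Submodule.span F {vB p.1 p.2}) '' Set.univ)
        ((fun u : F => Submodule.span F {vC u}) '' Set.univ) := by
      rw [Set.disjoint_left]
      rintro P (⟨p, -, rfl⟩ | ⟨p, -, rfl⟩) ⟨u, -, hu⟩
      · exact spanvN_ne_spanvC _ _ _ _ hu.symm
      · exact spanvB_ne_spanvC _ _ _ hu.symm
    have hfin1 : ((fun p : F × F => Submodule.span F {vN p.1 p.2 (p.1 * p.2)}) '' Set.univ).Finite :=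
      Set.finite_univ.image _
    have hfin2 : ((fun p : F × F => Submodule.span F {vB p.1 p.2}) '' Set.univ).Finite :=
      Set.finite_univ.image _
    have hfin3 : ((fun u : F => Submodule.span F {vC u}) '' Set.univ).Finite :=
      Set.finite_univ.image _
    rw [Set.ncard_union_eq hdABC (hfin1.union hfin2) hfin3,
      Set.ncard_union_eq hdAB hfin1 hfin2]
    have hinjN : Function.Injective (fun p : F × F => Submodule.span F {vN p.1 p.2 (p.1 * p.2)}) := by
      intro p p' h
      have := spanvN3_inj (F := F) (a₁ := (p.1, p.2, p.1 * p.2)) (a₂ := (p'.1, p'.2, p'.1 * p'.2)) h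
      have h1 : p.1 = p'.1 := congrArg (fun t : F × F × F => t.1) this
      have h2 : p.2 = p'.2 := congrArg (fun t : F × F × F => t.2.1) this
      exact Prod.ext h1 h2
    rw [Set.ncard_image_of_injective _ hinjN, Set.ncard_image_of_injective _ spanvB_inj,
      Set.ncard_image_of_injective _ spanvC_inj]
    simp only [Set.ncard_univ, Nat.card_eq_fintype_card, Fintype.card_prod, hq]
    ring
  -- Imaginary pairs
  · have hset : {P : Submodule F (Fin 6 → F) |
        ∃ a : Fin 6 → F, a ≠ 0 ∧ a ∈ W ∧ IsImagPair a ∧ P = Submodule.span F {a}}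
        = (∅ : Set (Submodule F (Fin 6 → F))) := by
      rw [Set.eq_empty_iff_forall_notMem]
      rintro P ⟨a, ha, haW, ⟨hd, hnf⟩, rfl⟩
      obtain ⟨h0, h3⟩ := (hWmem a).mp haW
      exact hnf (sing_factor h0 h3 hd)
    unfold numConics
    rw [hset, Set.ncard_empty]
  -- Nonsingular
  · have hset : {P : Submodule F (Fin 6 → F) |
        ∃ a : Fin 6 → F, a ≠ 0 ∧ a ∈ W ∧ IsNonsingular a ∧ P = Submodule.span F {a}}
        = (fun t : F × F × F => Submodule.span F {vN t.1 t.2.1 t.2.2}) ''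
          {t : F × F × F | t.2.2 ≠ t.1 * t.2.1} := by
      ext P
      simp only [Set.mem_setOf_eq, Set.mem_image]
      constructor
      · rintro ⟨a, ha, haW, hns, rfl⟩
        obtain ⟨h0, h3⟩ := (hWmem a).mp haW
        have hd : a 1 * (a 2 * a 4 - a 1 * a 5) ≠ 0 := by
          intro hh
          apply hns
          simp only [disc, h0, h3]
          linear_combination hh
        have h1 : a 1 ≠ 0 := fun hh => hd (by rw [hh]; ring)
        have h15 : a 2 * a 4 - a 1 * a 5 ≠ 0 := fun hh => hd (by rw [hh]; ring)
        refine ⟨(a 2 / a 1, a 4 / a 1, a 5 / a 1), ?_, ?_⟩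
        · simp only [Set.mem_setOf_eq]
          intro hh
          apply h15
          field_simp at hh
          have hz : a 1 * (a 2 * a 4 - a 1 * a 5) = 0 := by linear_combination -(a 1) * hh
          rcases mul_eq_zero.mp hz with hc | hc
          · exact absurd hc h1
          · exact hc
        · have hval : a = a 1 • vN (a 2 / a 1) (a 4 / a 1) (a 5 / a 1) := by
            funext i; fin_cases i <;> simp [vN, h0, h3] <;> field_simp
          simp only
          conv_rhs => rw [hval]
          rw [span_smul_eq h1]
      · rintro ⟨t, ht, rfl⟩
        refine ⟨vN t.1 t.2.1 t.2.2, vN_ne_zero _ _ _, (hWmem _).mpr ⟨rfl, rfl⟩, ?_, rfl⟩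
        simp only [IsNonsingular, disc, vN, cv6_0, cv6_1, cv6_2, cv6_3, cv6_4, cv6_5]
        intro hh
        apply ht
        linear_combination -hh
    unfold numConics
    rw [hset, Set.ncard_image_of_injective _ spanvN3_inj]
    have hcompl : {t : F × F × F | t.2.2 ≠ t.1 * t.2.1}
        = ((fun p : F × F => (p.1, p.2, p.1 * p.2)) '' Set.univ)ᶜ := by
      ext t
      simp only [Set.mem_setOf_eq, Set.mem_compl_iff, Set.mem_image, Set.mem_univ, true_and]
      constructor
      · rintro h ⟨p, hp⟩
        apply h
        rw [← hp]
      · intro h hh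
        exact h ⟨(t.1, t.2.1), by rw [← hh]⟩
    have hG : ((fun p : F × F => (p.1, p.2, p.1 * p.2)) '' Set.univ).ncard = q ^ 2 := by
      rw [Set.ncard_image_of_injective _ (fun p p' h => by
        have h1 : (p : F × F).1 = p'.1 := congrArg (fun t : F × F × F => t.1) h
        have h2 : (p : F × F).2 = p'.2 := congrArg (fun t : F × F × F => t.2.1) h
        exact Prod.ext h1 h2)]
      rw [Set.ncard_univ, Nat.card_eq_fintype_card, Fintype.card_prod, hq]
      ring
    rw [hcompl]
    have htot := Set.ncard_add_ncard_compl
      ((fun p : F × F => (p.1, p.2, p.1 * p.2)) '' (Set.univ : Set (F × F)))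
    have hcard : Nat.card (F × F × F) = q ^ 3 := by
      rw [Nat.card_eq_fintype_card, Fintype.card_prod, Fintype.card_prod, hq]; ring
    rw [hG, hcard] at htot
    exact Nat.eq_sub_of_add_eq' htot
end Conics
end
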